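/- arXiv:2007.04059 — 7 statements merged into one kernel-verified Lean document; each statement's English description precedes it below -/
import Mathlib

section
/- Given a colorful k-center instance and a feasible fractional solution (x, z) to LP1, there exist a set S ⊆ {j ∈ P : z_j > 0}, pairwise disjoint sets C_j ⊆ 𝓕(j) for j ∈ S, and a function y : S → [0, 1] such that Σ_{j ∈ S} y_j ≤ k, Σ_{j ∈ S} |C_j ∩ B| · y_j ≥ b, and Σ_{j ∈ S} |C_j ∩ R| · y_j ≥ r. -/
open scoped Classical

/-- The ball of radius `ρ` around `j` in a finite metric space. -/
noncomputable def bal {P : Type*} [Fintype P] [MetricSpace P] (j : P) (ρ : ℝ) : Finset P :=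
  Finset.univ.filter fun i => dist i j ≤ ρ

/-- The flower centered at `j`: the union of unit balls around points of the unit ball at `j`. -/
noncomputable def flower {P : Type*} [Fintype P] [MetricSpace P] (j : P) : Finset P :=
  (bal j 1).biUnion fun i => bal i 1

theorem greedy {P : Type*} [Fintype P] [MetricSpace P] (z : P → ℝ) :
    ∀ T : Finset P, ∃ (S : Finset P) (C : P → Finset P),
      S ⊆ T ∧
      (∀ j ∈ S, 0 < z j) ∧
      (∀ j ∈ S, C j ⊆ T) ∧
      (∀ j ∈ S, C j ⊆ flower j) ∧
      (∀ j ∈ S, ∀ j' ∈ S, j ≠ j' → Disjoint (C j) (C j')) ∧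
      (∀ j ∈ S, ∀ j' ∈ S, j ≠ j' → Disjoint (bal j 1) (bal j' 1)) ∧
      (∀ j ∈ S, ∀ j' ∈ C j, z j' ≤ z j) ∧
      (∀ j' ∈ T, 0 < z j' → ∃ j ∈ S, j' ∈ C j) := by
  intro T
  induction T using Finset.strongInduction with
  | _ T ih =>
    by_cases hT : (T.filter fun j => 0 < z j).Nonempty
    · obtain ⟨j, hjT', hjmax⟩ := Finset.exists_max_image _ z hT
      have hjT : j ∈ T := (Finset.mem_filter.1 hjT').1
      have hjz : 0 < z j := (Finset.mem_filter.1 hjT').2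
      set Cj : Finset P := T.filter (fun j' => ¬ Disjoint (bal j' 1) (bal j 1)) with hCj
      have hjCj : j ∈ Cj := by
        refine Finset.mem_filter.2 ⟨hjT, ?_⟩
        intro h
        have : j ∈ bal j 1 := by simp [bal]
        exact (Finset.disjoint_left.1 h this) this
      have hss : T \ Cj ⊂ T := by
        refine Finset.sdiff_ssubset (Finset.filter_subset _ _) ⟨j, hjCj⟩
      obtain ⟨S', C', hS'T, hS'z, hC'T, hC'fl, hC'disj, hball, hmax', hcov'⟩ := ih _ hss
      refine ⟨insert j S', fun i => if i = j then Cj else C' i, ?_, ?_, ?_, ?_, ?_, ?_, ?_, ?_⟩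
      · exact Finset.insert_subset hjT (hS'T.trans (Finset.sdiff_subset))
      · intro i hi
        rcases Finset.mem_insert.1 hi with rfl | hi
        · exact hjz
        · exact hS'z i hi
      · intro i hi
        rcases Finset.mem_insert.1 hi with rfl | hi
        · simp only [if_pos rfl]
          exact Finset.filter_subset _ _
        · have hij : i ≠ j := fun h => by
            have := hS'T hi; rw [h] at this
            exact (Finset.mem_sdiff.1 this).2 hjCj
          simp only [if_neg hij]
          exact (hC'T i hi).trans Finset.sdiff_subset
      · intro i hi
        have key : Cj ⊆ flower j := by
          intro p hp
          obtain ⟨-, hnd⟩ := Finset.mem_filter.1 hp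
          rw [Finset.not_disjoint_iff] at hnd
          obtain ⟨m, hm1, hm2⟩ := hnd
          exact Finset.mem_biUnion.2 ⟨m, hm2, by
            simp only [bal, Finset.mem_filter, Finset.mem_univ, true_and] at hm1 ⊢
            rw [dist_comm]; exact hm1⟩
        rcases Finset.mem_insert.1 hi with rfl | hi
        · simpa only [if_pos rfl, ↓reduceIte] using key
        · have hij : i ≠ j := fun h => by
            have := hS'T hi; rw [h] at this
            exact (Finset.mem_sdiff.1 this).2 hjCj
          simp only [if_neg hij]
          exact hC'fl i hi
      · intro i hi i' hi' hne
        have hne' : ∀ m ∈ S', m ≠ j := fun m hm h => by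
          have := hS'T hm; rw [h] at this
          exact (Finset.mem_sdiff.1 this).2 hjCj
        rcases Finset.mem_insert.1 hi with h1 | h1 <;>
          rcases Finset.mem_insert.1 hi' with h2 | h2
        · exact absurd (h1.trans h2.symm) hne
        · simp only [if_pos h1, if_neg (hne' i' h2)]
          exact Finset.disjoint_left.2 fun p hp hp' =>
            (Finset.mem_sdiff.1 (hC'T i' h2 hp')).2 hp
        · simp only [if_neg (hne' i h1), if_pos h2]
          exact Finset.disjoint_left.2 fun p hp hp' =>
            (Finset.mem_sdiff.1 (hC'T i h1 hp)).2 hp'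
        · simp only [if_neg (hne' i h1), if_neg (hne' i' h2)]
          exact hC'disj i h1 i' h2 hne
      · intro i hi i' hi' hne
        have hne' : ∀ m ∈ S', m ≠ j := fun m hm h => by
          have := hS'T hm; rw [h] at this
          exact (Finset.mem_sdiff.1 this).2 hjCj
        have hdball : ∀ m ∈ S', Disjoint (bal m 1) (bal j 1) := fun m hm => by
          have := hS'T hm
          have hmn : m ∉ Cj := (Finset.mem_sdiff.1 this).2
          have hmT : m ∈ T := (Finset.mem_sdiff.1 this).1
          by_contra h
          exact hmn (Finset.mem_filter.2 ⟨hmT, h⟩)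
        rcases Finset.mem_insert.1 hi with h1 | h1 <;>
          rcases Finset.mem_insert.1 hi' with h2 | h2
        · exact absurd (h1.trans h2.symm) hne
        · exact h1 ▸ (hdball i' h2).symm
        · exact h2 ▸ hdball i h1
        · exact hball i h1 i' h2 hne
      · intro i hi p hp
        have hne' : ∀ m ∈ S', m ≠ j := fun m hm h => by
          have := hS'T hm; rw [h] at this
          exact (Finset.mem_sdiff.1 this).2 hjCj
        rcases Finset.mem_insert.1 hi with rfl | hi
        · simp only [if_pos rfl] at hp
          have hpT : p ∈ T := (Finset.mem_filter.1 hp).1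
          by_cases hpz : 0 < z p
          · exact hjmax p (Finset.mem_filter.2 ⟨hpT, hpz⟩)
          · linarith [not_lt.1 hpz]
        · simp only [if_neg (hne' i hi)] at hp
          exact hmax' i hi p hp
      · intro p hpT hpz
        by_cases hpC : p ∈ Cj
        · exact ⟨j, Finset.mem_insert_self _ _, by simp only [if_pos rfl]; exact hpC⟩
        · obtain ⟨i, hiS', hpCi⟩ := hcov' p (Finset.mem_sdiff.2 ⟨hpT, hpC⟩) hpz
          have hij : i ≠ j := fun h => by
            have := hS'T hiS'; rw [h] at this
            exact (Finset.mem_sdiff.1 this).2 hjCj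
          exact ⟨i, Finset.mem_insert_of_mem hiS', by simp only [if_neg hij]; exact hpCi⟩
    · refine ⟨∅, fun _ => ∅, by simp, by simp, by simp, by simp, by simp, by simp, by simp, ?_⟩
      intro p hpT hpz
      exact absurd ⟨p, Finset.mem_filter.2 ⟨hpT, hpz⟩⟩ hT

/-- given a feasible fractional solution `(x, z)` to LP1, there exist
`S ⊆ {j : z j > 0}`, pairwise disjoint clusters `C j ⊆ 𝓕(j)` for `j ∈ S`, and
`y : S → [0,1]` with `∑ y ≤ k`, `∑ |C j ∩ B| y j ≥ b` and `∑ |C j ∩ R| y j ≥ r`. -/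
theorem stmt0 {P : Type*} [Fintype P] [MetricSpace P]
    (R B : Finset P) (hpart : ∀ p : P, (p ∈ R ∧ p ∉ B) ∨ (p ∈ B ∧ p ∉ R))
    (k r b : ℕ) (x z : P → ℝ)
    (hx0 : ∀ i, 0 ≤ x i) (hx1 : ∀ i, x i ≤ 1)
    (hz0 : ∀ j, 0 ≤ z j) (hz1 : ∀ j, z j ≤ 1)
    (hcov : ∀ j : P, z j ≤ ∑ i ∈ bal j 1, x i)
    (hk : ∑ i : P, x i ≤ (k : ℝ))
    (hr : (r : ℝ) ≤ ∑ j ∈ R, z j)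
    (hb : (b : ℝ) ≤ ∑ j ∈ B, z j) :
    ∃ (S : Finset P) (C : P → Finset P) (y : P → ℝ),
      (∀ j ∈ S, 0 < z j) ∧
      (∀ j ∈ S, C j ⊆ flower j) ∧
      (∀ j ∈ S, ∀ j' ∈ S, j ≠ j' → Disjoint (C j) (C j')) ∧
      (∀ j ∈ S, 0 ≤ y j ∧ y j ≤ 1) ∧
      (∑ j ∈ S, y j ≤ (k : ℝ)) ∧
      ((b : ℝ) ≤ ∑ j ∈ S, ((C j ∩ B).card : ℝ) * y j) ∧
      ((r : ℝ) ≤ ∑ j ∈ S, ((C j ∩ R).card : ℝ) * y j) := by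
  obtain ⟨S, C, hST, hSz, hCT, hCfl, hCdisj, hball, hmaxz, hcovr⟩ := greedy z Finset.univ
  set y : P → ℝ := fun j => min 1 (∑ i ∈ bal j 1, x i) with hy
  have hy0 : ∀ j, 0 ≤ y j := fun j =>
    le_min zero_le_one (Finset.sum_nonneg fun i _ => hx0 i)
  have hzy : ∀ j, z j ≤ y j := fun j => le_min (hz1 j) (hcov j)
  have hyk : ∑ j ∈ S, y j ≤ (k : ℝ) := by
    have h1 : ∑ j ∈ S, y j ≤ ∑ j ∈ S, ∑ i ∈ bal j 1, x i :=
      Finset.sum_le_sum fun j _ => min_le_right _ _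
    have h2 : ∑ j ∈ S, ∑ i ∈ bal j 1, x i
        = ∑ i ∈ S.biUnion (fun j => bal j 1), x i := by
      rw [Finset.sum_biUnion]
      intro a ha b hb hab
      exact hball a ha b hb hab
    have h3 : ∑ i ∈ S.biUnion (fun j => bal j 1), x i ≤ ∑ i : P, x i :=
      Finset.sum_le_sum_of_subset_of_nonneg (Finset.subset_univ _)
        fun i _ _ => hx0 i
    linarith
  have claim : ∀ A : Finset P,
      (∑ j ∈ A, z j) ≤ ∑ j ∈ S, ((C j ∩ A).card : ℝ) * y j := by
    intro A
    set U : Finset P := S.biUnion (fun j => C j ∩ A) with hU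
    have hAU : ∑ j ∈ A, z j ≤ ∑ j ∈ U, z j := by
      have hsplit : ∑ j ∈ A ∩ U, z j + ∑ j ∈ A \ U, z j = ∑ j ∈ A, z j :=
        Finset.sum_inter_add_sum_sdiff A U z
      have hz00 : ∀ j ∈ A \ U, z j = 0 := by
        intro p hp
        obtain ⟨hpA, hpU⟩ := Finset.mem_sdiff.1 hp
        by_contra hne
        have hpz : 0 < z p := lt_of_le_of_ne (hz0 p) (Ne.symm hne)
        obtain ⟨j, hjS, hpCj⟩ := hcovr p (Finset.mem_univ p) hpz
        exact hpU (Finset.mem_biUnion.2 ⟨j, hjS, Finset.mem_inter.2 ⟨hpCj, hpA⟩⟩)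
      have h0 : ∑ j ∈ A \ U, z j = 0 := Finset.sum_eq_zero hz00
      have hsub : ∑ j ∈ A ∩ U, z j ≤ ∑ j ∈ U, z j :=
        Finset.sum_le_sum_of_subset_of_nonneg Finset.inter_subset_right
          fun i _ _ => hz0 i
      linarith
    have hUsum : ∑ j ∈ U, z j = ∑ j ∈ S, ∑ p ∈ C j ∩ A, z p := by
      rw [hU, Finset.sum_biUnion]
      intro a ha b hb hab
      exact Finset.disjoint_left.2 fun p hp hp' =>
        Finset.disjoint_left.1 (hCdisj a ha b hb hab)
          (Finset.mem_inter.1 hp).1 (Finset.mem_inter.1 hp').1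
    have hinner : ∀ j ∈ S, ∑ p ∈ C j ∩ A, z p ≤ ((C j ∩ A).card : ℝ) * y j := by
      intro j hj
      calc ∑ p ∈ C j ∩ A, z p ≤ (C j ∩ A).card • z j := by
            apply Finset.sum_le_card_nsmul
            intro p hp
            exact hmaxz j hj p (Finset.mem_inter.1 hp).1
        _ = ((C j ∩ A).card : ℝ) * z j := by rw [nsmul_eq_mul]
        _ ≤ ((C j ∩ A).card : ℝ) * y j :=
            mul_le_mul_of_nonneg_left (hzy j) (Nat.cast_nonneg _)
    calc ∑ j ∈ A, z j ≤ ∑ j ∈ U, z j := hAU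
      _ = ∑ j ∈ S, ∑ p ∈ C j ∩ A, z p := hUsum
      _ ≤ ∑ j ∈ S, ((C j ∩ A).card : ℝ) * y j := Finset.sum_le_sum hinner
  exact ⟨S, C, y, hSz, hCfl, hCdisj,
    fun j _ => ⟨hy0 j, min_le_left _ _⟩, hyk,
    hb.trans (claim B), hr.trans (claim R)⟩
end

section
/- Given a colorful k-center instance and a feasible fractional solution (x, z) to LP1, there exists a set C ⊆ P with |C| ≤ k such that |B ∩ ∪_{c ∈ C} 𝓑(c, 2)| ≥ b and |R ∩ ∪_{c ∈ C} 𝓑(c, 2)| ≥ r − max_{j ∈ P : z_j > 0} |𝓕(j) ∩ R|; that is, balls of radius two around at most k points cover at least b blue points and at least r − max_{j : z_j > 0} |𝓕(j) ∩ R| red points. -/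
open scoped Classical

set_option maxHeartbeats 1000000

lemma knapsack {ι : Type*} [DecidableEq ι] (k : ℕ) (b r M : ℝ) (hM0 : 0 ≤ M)
    (blue red : ι → ℕ) (D : Finset ι) (hMred : ∀ j ∈ D, (red j : ℝ) ≤ M) :
    ∀ w : ι → ℝ, (∀ j ∈ D, 0 ≤ w j) → (∀ j ∈ D, w j ≤ 1) →
      (∑ j ∈ D, w j ≤ k) → (b ≤ ∑ j ∈ D, w j * blue j) → (r ≤ ∑ j ∈ D, w j * red j) →
      ∃ S, S ⊆ D ∧ S.card ≤ k ∧ b ≤ ∑ j ∈ S, (blue j : ℝ) ∧ r - M ≤ ∑ j ∈ S, (red j : ℝ) := by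
  suffices H : ∀ n : ℕ, ∀ w : ι → ℝ, (∀ j ∈ D, 0 ≤ w j) → (∀ j ∈ D, w j ≤ 1) →
      (∑ j ∈ D, w j ≤ k) → (b ≤ ∑ j ∈ D, w j * blue j) → (r ≤ ∑ j ∈ D, w j * red j) →
      (D.filter fun j => w j ≠ 0 ∧ w j ≠ 1).card = n →
      ∃ S, S ⊆ D ∧ S.card ≤ k ∧ b ≤ ∑ j ∈ S, (blue j : ℝ) ∧ r - M ≤ ∑ j ∈ S, (red j : ℝ) by
    intro w h0 h1 h2 h3 h4
    exact H _ w h0 h1 h2 h3 h4 rfl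
  intro n
  induction n using Nat.strong_induction_on with
  | _ n ih =>
  intro w hw0 hw1 hwk hwb hwr hcard
  set F := D.filter fun j => w j ≠ 0 ∧ w j ≠ 1 with hF
  set S0 := D.filter fun j => w j = 1 with hS0
  have hS0D : S0 ⊆ D := Finset.filter_subset _ _
  have hFD : F ⊆ D := Finset.filter_subset _ _
  have hS0F : Disjoint S0 F := by
    rw [Finset.disjoint_left]
    intro a ha ha'
    exact (Finset.mem_filter.1 ha').2.2 (Finset.mem_filter.1 ha).2
  have split : ∀ g : ι → ℝ, ∑ j ∈ D, w j * g j = ∑ j ∈ S0, g j + ∑ j ∈ F, w j * g j := by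
    intro g
    have h1 : ∑ j ∈ S0 ∪ F, w j * g j = ∑ j ∈ D, w j * g j := by
      apply Finset.sum_subset (Finset.union_subset hS0D hFD)
      intro i hi hi'
      rw [Finset.mem_union] at hi'
      push_neg at hi'
      have : w i = 0 := by
        by_contra h
        exact hi'.2 (Finset.mem_filter.2 ⟨hi, h, fun h1 => hi'.1 (Finset.mem_filter.2 ⟨hi, h1⟩)⟩)
      simp [this]
    rw [← h1, Finset.sum_union hS0F]
    congr 1
    apply Finset.sum_congr rfl
    intro i hi
    rw [(Finset.mem_filter.1 hi).2, one_mul]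
  have splitw : ∑ j ∈ D, w j = (S0.card : ℝ) + ∑ j ∈ F, w j := by
    have := split (fun _ => 1)
    simpa using this
  by_cases hn3 : 3 ≤ F.card
  · -- reduction step
    obtain ⟨T, hTF, hT3⟩ := Finset.exists_subset_card_eq hn3
    obtain ⟨p, q, s, hpq, hps, hqs, rfl⟩ := Finset.card_eq_three.1 hT3
    have hpF : p ∈ F := hTF (by simp)
    have hqF : q ∈ F := hTF (by simp)
    have hsF : s ∈ F := hTF (by simp)
    have hpD : p ∈ D := hFD hpF
    have hqD : q ∈ D := hFD hqF
    have hsD : s ∈ D := hFD hsF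
    have hfrac : ∀ i ∈ F, 0 < w i ∧ w i < 1 := by
      intro i hi
      obtain ⟨hiD, h0, h1⟩ := Finset.mem_filter.1 hi
      exact ⟨lt_of_le_of_ne (hw0 i hiD) (Ne.symm h0), lt_of_le_of_ne (hw1 i hiD) h1⟩
    have tri : ∀ (a : ι → ℝ), (∀ i, i ≠ p → i ≠ q → i ≠ s → a i = 0) → ∀ g : ι → ℝ,
        ∑ i ∈ D, a i * g i = a p * g p + a q * g q + a s * g s := by
      intro a ha g
      have hsub : ({p, q, s} : Finset ι) ⊆ D := by
        intro i hi
        rcases Finset.mem_insert.1 hi with rfl | hi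
        · exact hpD
        rcases Finset.mem_insert.1 hi with rfl | hi
        · exact hqD
        · rw [Finset.mem_singleton] at hi; exact hi ▸ hsD
      rw [← Finset.sum_subset hsub (fun i _ hi => by
        rw [Finset.mem_insert, Finset.mem_insert, Finset.mem_singleton] at hi
        push_neg at hi
        rw [ha i hi.1 hi.2.1 hi.2.2, zero_mul])]
      rw [Finset.sum_insert (by simp [hpq, hps]), Finset.sum_insert (by simp [hqs]),
        Finset.sum_singleton]
      ring
    have key : ∀ A : ι → ℤ, (∀ i, i ≠ p → i ≠ q → i ≠ s → A i = 0) →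
        ((A p : ℝ) + A q + A s = 0) →
        ((A p : ℝ) * blue p + A q * blue q + A s * blue s = 0) →
        (0 ≤ (A p : ℝ) * red p + A q * red q + A s * red s) →
        (A p ≠ 0 ∨ A q ≠ 0 ∨ A s ≠ 0) →
        ∃ S, S ⊆ D ∧ S.card ≤ k ∧ b ≤ ∑ j ∈ S, (blue j : ℝ) ∧ r - M ≤ ∑ j ∈ S, (red j : ℝ) := by
      intro A hsupp hA1 hAblue hAred hact
      set bnd : ι → ℝ := fun i =>
        if 0 < A i then (1 - w i) / (A i : ℝ) else if A i < 0 then w i / (-(A i : ℝ)) else 2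
        with hbnd
      have bnd_pos : ∀ i, 0 < w i → w i < 1 → 0 < bnd i := by
        intro i h0 h1
        simp only [hbnd]
        split_ifs with h h'
        · exact div_pos (by linarith) (by exact_mod_cast h)
        · exact div_pos h0 (by simp only [neg_pos]; exact_mod_cast h')
        · norm_num
      have bnd_le : ∀ i, 0 ≤ w i → w i ≤ 1 → A i ≠ 0 → bnd i ≤ 1 := by
        intro i h0 h1 hne
        simp only [hbnd]
        split_ifs with h h'
        · rw [div_le_one (by exact_mod_cast h)]
          have : (1 : ℝ) ≤ (A i : ℝ) := by exact_mod_cast (by omega : (1:ℤ) ≤ A i)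
          linarith
        · have : (1 : ℝ) ≤ -(A i : ℝ) := by
            have : (1:ℤ)  ≤ -A i := by omega
            exact_mod_cast this
          rw [div_le_one (by linarith)]
          linarith
        · omega
      set δ := min (bnd p) (min (bnd q) (bnd s)) with hδ
      have hδp : δ ≤ bnd p := min_le_left _ _
      have hδq : δ ≤ bnd q := le_trans (min_le_right _ _) (min_le_left _ _)
      have hδs : δ ≤ bnd s := le_trans (min_le_right _ _) (min_le_right _ _)
      have hδ0 : 0 < δ := by
        apply lt_min ((bnd_pos p (hfrac p hpF).1 (hfrac p hpF).2))
        exact lt_min ((bnd_pos q (hfrac q hqF).1 (hfrac q hqF).2))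
          ((bnd_pos s (hfrac s hsF).1 (hfrac s hsF).2))
      set w' : ι → ℝ := fun i => w i + δ * (A i : ℝ) with hw'
      have step : ∀ i, 0 ≤ w i → w i ≤ 1 → δ ≤ bnd i → 0 ≤ w' i ∧ w' i ≤ 1 := by
        intro i h0 h1 hδi
        simp only [hw']
        simp only [hbnd] at hδi
        rcases lt_trichotomy (A i) 0 with h | h | h
        · rw [if_neg (by omega), if_pos h] at hδi
          have hA : (A i : ℝ) < 0 := by exact_mod_cast h
          constructor
          · nlinarith [mul_le_mul_of_nonneg_right hδi (by linarith : (0:ℝ) ≤ -(A i : ℝ)),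
              div_mul_cancel₀ (w i) (by linarith : -(A i : ℝ) ≠ 0)]
          · nlinarith
        · simp [h, h0, h1]
        · rw [if_pos h] at hδi
          have hA : (0:ℝ) < (A i : ℝ) := by exact_mod_cast h
          constructor
          · nlinarith
          · nlinarith [mul_le_mul_of_nonneg_right hδi (le_of_lt hA),
              div_mul_cancel₀ (1 - w i) (ne_of_gt hA)]
      have hstep3 : ∀ i ∈ D, 0 ≤ w' i ∧ w' i ≤ 1 := by
        intro i hiD
        by_cases hip : i = p
        · exact hip ▸ step p (hw0 p hpD) (hw1 p hpD) hδp
        by_cases hiq : i = q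
        · exact hiq ▸ step q (hw0 q hqD) (hw1 q hqD) hδq
        by_cases his : i = s
        · exact his ▸ step s (hw0 s hsD) (hw1 s hsD) hδs
        · have : w' i = w i := by simp [hw', hsupp i hip hiq his]
          rw [this]
          exact ⟨hw0 i hiD, hw1 i hiD⟩
      have sumw' : ∀ g : ι → ℝ, ∑ j ∈ D, w' j * g j
          = ∑ j ∈ D, w j * g j + δ * ((A p : ℝ) * g p + A q * g q + A s * g s) := by
        intro g
        simp only [hw']
        have h1 : ∀ j, (w j + δ * (A j : ℝ)) * g j = w j * g j + δ * ((A j : ℝ) * g j) := by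
          intro j; ring
        simp_rw [h1]
        rw [Finset.sum_add_distrib, ← Finset.mul_sum, tri (fun i => (A i : ℝ))
          (fun i ha hb hc => show (A i : ℝ) = 0 by rw [hsupp i ha hb hc]; simp) g]
      have hhit : ∃ j', (j' = p ∨ j' = q ∨ j' = s) ∧ A j' ≠ 0 ∧ δ = bnd j' := by
        have honeact : ∃ i, (i = p ∨ i = q ∨ i = s) ∧ A i ≠ 0 := by
          rcases hact with h | h | h
          · exact ⟨p, Or.inl rfl, h⟩
          · exact ⟨q, Or.inr (Or.inl rfl), h⟩
          · exact ⟨s, Or.inr (Or.inr rfl), h⟩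
        obtain ⟨i0, hi0mem, hi0⟩ := honeact
        have hbndi0 : bnd i0 ≤ 1 := by
          rcases hi0mem with rfl | rfl | rfl
          · exact bnd_le i0 (hw0 i0 hpD) (hw1 i0 hpD) hi0
          · exact bnd_le i0 (hw0 i0 hqD) (hw1 i0 hqD) hi0
          · exact bnd_le i0 (hw0 i0 hsD) (hw1 i0 hsD) hi0
        have hδ1 : δ ≤ 1 := by
          rcases hi0mem with rfl | rfl | rfl
          · exact le_trans hδp hbndi0
          · exact le_trans hδq hbndi0
          · exact le_trans hδs hbndi0
        have nz : ∀ j', δ = bnd j' → A j' ≠ 0 := by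
          intro j' hj' hAj'
          simp only [hbnd, hAj'] at hj'
          norm_num at hj'
          linarith
        have hmin : δ = bnd p ∨ δ = bnd q ∨ δ = bnd s := by
          rw [hδ]
          rcases min_cases (bnd p) (min (bnd q) (bnd s)) with ⟨h, _⟩ | ⟨h, _⟩
          · exact Or.inl h
          · rcases min_cases (bnd q) (bnd s) with ⟨h2, _⟩ | ⟨h2, _⟩
            · exact Or.inr (Or.inl (h.trans h2))
            · exact Or.inr (Or.inr (h.trans h2))
        rcases hmin with h | h | h
        · exact ⟨p, Or.inl rfl, nz p h, h⟩
        · exact ⟨q, Or.inr (Or.inl rfl), nz q h, h⟩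
        · exact ⟨s, Or.inr (Or.inr rfl), nz s h, h⟩
      obtain ⟨j', hj'mem, hAj', hδj'⟩ := hhit
      have hj'F : j' ∈ F := by rcases hj'mem with rfl | rfl | rfl <;> assumption
      have hj'int : w' j' = 0 ∨ w' j' = 1 := by
        simp only [hw', hδj', hbnd]
        rcases lt_trichotomy (A j') 0 with h | h | h
        · left
          rw [if_neg (by omega), if_pos h]
          have hA : (A j' : ℝ) < 0 := by exact_mod_cast h
          have hkey : w j' / -(A j' : ℝ) * (A j' : ℝ) = -w j' := by
            rw [div_neg, neg_mul, div_mul_cancel₀ _ (ne_of_lt hA)]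
          linarith [hkey]
        · exact absurd h hAj'
        · right
          rw [if_pos h]
          have hA : (A j' : ℝ) ≠ 0 := by
            have : (0:ℝ) < (A j' : ℝ) := by exact_mod_cast h
            linarith
          field_simp
          ring
      have hF'sub : (D.filter fun j => w' j ≠ 0 ∧ w' j ≠ 1) ⊆ F.erase j' := by
        intro i hi
        obtain ⟨hiD, hi0, hi1⟩ := Finset.mem_filter.1 hi
        have hiF : i ∈ F := by
          by_cases hip : i = p
          · exact hip ▸ hpF
          by_cases hiq : i = q
          · exact hiq ▸ hqF
          by_cases his : i = s
          · exact his ▸ hsF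
          · have : w' i = w i := by simp [hw', hsupp i hip hiq his]
            rw [this] at hi0 hi1
            exact Finset.mem_filter.2 ⟨hiD, hi0, hi1⟩
        refine Finset.mem_erase.2 ⟨?_, hiF⟩
        rintro rfl
        rcases hj'int with h | h
        · exact hi0 h
        · exact hi1 h
      have hcard' : (D.filter fun j => w' j ≠ 0 ∧ w' j ≠ 1).card < n := by
        calc (D.filter fun j => w' j ≠ 0 ∧ w' j ≠ 1).card ≤ (F.erase j').card :=
              Finset.card_le_card hF'sub
        _ < F.card := Finset.card_erase_lt_of_mem hj'F
        _ = n := hcard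
      refine ih _ hcard' w' (fun j hj => (hstep3 j hj).1) (fun j hj => (hstep3 j hj).2) ?_ ?_ ?_ rfl
      · have h := sumw' (fun _ => 1)
        simp only [mul_one] at h
        calc ∑ j ∈ D, w' j = ∑ j ∈ D, w j + δ * ((A p : ℝ) + A q + A s) := h
        _ = ∑ j ∈ D, w j := by rw [hA1, mul_zero, add_zero]
        _ ≤ k := hwk
      · calc b ≤ ∑ j ∈ D, w j * blue j := hwb
        _ = ∑ j ∈ D, w' j * blue j := by
            rw [sumw' (fun j => (blue j : ℝ)), hAblue, mul_zero, add_zero]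
      · calc r ≤ ∑ j ∈ D, w j * red j := hwr
        _ ≤ ∑ j ∈ D, w' j * red j := by
            rw [sumw' (fun j => (red j : ℝ))]
            nlinarith
    -- construct the direction
    by_cases hbqs : blue q = blue s
    · set A : ι → ℤ := fun i => if i = q then 1 else if i = s then -1 else 0 with hA
      have hAp : A p = 0 := by simp [hA, hpq, hps]
      have hAq : A q = 1 := by simp [hA]
      have hAs : A s = -1 := by simp [hA, (Ne.symm hqs : s ≠ q)]
      have hsupp : ∀ i, i ≠ p → i ≠ q → i ≠ s → A i = 0 := by
        intro i _ h2 h3; simp [hA, h2, h3]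
      have h1 : (A p : ℝ) + A q + A s = 0 := by rw [hAp, hAq, hAs]; norm_num
      have h2 : (A p : ℝ) * blue p + A q * blue q + A s * blue s = 0 := by
        rw [hAp, hAq, hAs, hbqs]; push_cast; ring
      rcases le_total 0 ((A p : ℝ) * red p + A q * red q + A s * red s) with hc | hc
      · exact key A hsupp h1 h2 hc (Or.inr (Or.inl (by rw [hAq]; norm_num)))
      · refine key (fun i => -A i) (fun i ha hb hc' => show -A i = 0 by
            rw [hsupp i ha hb hc']; ring) ?_ ?_ ?_
          (Or.inr (Or.inl (show -A q ≠ 0 by rw [hAq]; norm_num)))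
        · show ((-A p : ℤ) : ℝ) + ((-A q : ℤ) : ℝ) + ((-A s : ℤ) : ℝ) = 0
          push_cast
          push_cast at h1
          linarith
        · show ((-A p : ℤ) : ℝ) * blue p + ((-A q : ℤ) : ℝ) * blue q
            + ((-A s : ℤ) : ℝ) * blue s = 0
          push_cast
          push_cast at h2
          linarith
        · show 0 ≤ ((-A p : ℤ) : ℝ) * red p + ((-A q : ℤ) : ℝ) * red q
            + ((-A s : ℤ) : ℝ) * red s
          push_cast
          push_cast at hc
          linarith
    · set A : ι → ℤ := fun i => if i = p then ((blue q : ℤ) - blue s)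
        else if i = q then ((blue s : ℤ) - blue p)
        else if i = s then ((blue p : ℤ) - blue q) else 0 with hA
      have hAp : A p = (blue q : ℤ) - blue s := by simp [hA]
      have hAq : A q = (blue s : ℤ) - blue p := by simp [hA, (Ne.symm hpq : q ≠ p)]
      have hAs : A s = (blue p : ℤ) - blue q := by
        simp [hA, (Ne.symm hps : s ≠ p), (Ne.symm hqs : s ≠ q)]
      have hsupp : ∀ i, i ≠ p → i ≠ q → i ≠ s → A i = 0 := by
        intro i h1 h2 h3; simp [hA, h1, h2, h3]
      have h1 : (A p : ℝ) + A q + A s = 0 := by rw [hAp, hAq, hAs]; push_cast; ring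
      have h2 : (A p : ℝ) * blue p + A q * blue q + A s * blue s = 0 := by
        rw [hAp, hAq, hAs]; push_cast; ring
      have hactp : A p ≠ 0 := by
        rw [hAp]
        exact sub_ne_zero.2 (fun h => hbqs (by exact_mod_cast h))
      rcases le_total 0 ((A p : ℝ) * red p + A q * red q + A s * red s) with hc | hc
      · exact key A hsupp h1 h2 hc (Or.inl hactp)
      · refine key (fun i => -A i) (fun i ha hb hc' => show -A i = 0 by
            rw [hsupp i ha hb hc']; ring) ?_ ?_ ?_
          (Or.inl (show -A p ≠ 0 by simpa using hactp))
        · show ((-A p : ℤ) : ℝ) + ((-A q : ℤ) : ℝ) + ((-A s : ℤ) : ℝ) = 0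
          push_cast
          push_cast at h1
          linarith
        · show ((-A p : ℤ) : ℝ) * blue p + ((-A q : ℤ) : ℝ) * blue q
            + ((-A s : ℤ) : ℝ) * blue s = 0
          push_cast
          push_cast at h2
          linarith
        · show 0 ≤ ((-A p : ℤ) : ℝ) * red p + ((-A q : ℤ) : ℝ) * red q
            + ((-A s : ℤ) : ℝ) * red s
          push_cast
          push_cast at hc
          linarith
  · -- terminal cases: F.card ≤ 2
    push_neg at hn3
    have hcases : F.card = 0 ∨ F.card = 1 ∨ F.card = 2 := by omega
    rcases hcases with h | h | h
    · -- F = ∅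
      have hFe : F = ∅ := Finset.card_eq_zero.1 h
      refine ⟨S0, hS0D, ?_, ?_, ?_⟩
      · have : (S0.card : ℝ) ≤ k := by rw [splitw, hFe] at hwk; simpa using hwk
        exact_mod_cast this
      · rw [split (fun j => (blue j : ℝ)), hFe] at hwb; simpa using hwb
      · rw [split (fun j => (red j : ℝ)), hFe] at hwr
        simp only [Finset.sum_empty, add_zero] at hwr
        linarith
    · -- F = {p}
      obtain ⟨p, hFp⟩ := Finset.card_eq_one.1 h
      have hpF : p ∈ F := hFp ▸ Finset.mem_singleton_self p
      obtain ⟨hpD, hp0, hp1⟩ := Finset.mem_filter.1 hpF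
      have hwp0 : 0 < w p := lt_of_le_of_ne (hw0 p hpD) (Ne.symm hp0)
      have hwp1 : w p < 1 := lt_of_le_of_ne (hw1 p hpD) hp1
      have hpS0 : p ∉ S0 := fun hp => hp1 (Finset.mem_filter.1 hp).2
      refine ⟨insert p S0, Finset.insert_subset hpD hS0D, ?_, ?_, ?_⟩
      · rw [Finset.card_insert_of_notMem hpS0]
        have h2 : (S0.card : ℝ) + w p ≤ k := by rw [splitw, hFp] at hwk; simpa using hwk
        have h3 : (S0.card : ℝ) < k := by linarith
        have h4 : S0.card < k := by exact_mod_cast h3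
        omega
      · rw [Finset.sum_insert hpS0]
        rw [split (fun j => (blue j : ℝ)), hFp] at hwb
        simp only [Finset.sum_singleton] at hwb
        nlinarith [Nat.cast_nonneg (α := ℝ) (blue p)]
      · rw [Finset.sum_insert hpS0]
        rw [split (fun j => (red j : ℝ)), hFp] at hwr
        simp only [Finset.sum_singleton] at hwr
        nlinarith [Nat.cast_nonneg (α := ℝ) (red p)]
    · -- F = {p, q}
      obtain ⟨p, q, hpq, hFpq⟩ := Finset.card_eq_two.1 h
      have key2 : ∀ p q : ι, p ≠ q → F = {p, q} → (blue q : ℝ) ≤ blue p →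
          ∃ S, S ⊆ D ∧ S.card ≤ k ∧ b ≤ ∑ j ∈ S, (blue j : ℝ)
            ∧ r - M ≤ ∑ j ∈ S, (red j : ℝ) := by
        intro p q hpq hFpq hbleq
        have hpF : p ∈ F := hFpq ▸ by simp
        have hqF : q ∈ F := hFpq ▸ by simp
        obtain ⟨hpD, hp0, hp1⟩ := Finset.mem_filter.1 hpF
        obtain ⟨hqD, hq0, hq1⟩ := Finset.mem_filter.1 hqF
        have hwp0 : 0 < w p := lt_of_le_of_ne (hw0 p hpD) (Ne.symm hp0)
        have hwp1 : w p < 1 := lt_of_le_of_ne (hw1 p hpD) hp1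
        have hwq0 : 0 < w q := lt_of_le_of_ne (hw0 q hqD) (Ne.symm hq0)
        have hwq1 : w q < 1 := lt_of_le_of_ne (hw1 q hqD) hq1
        have hpS0 : p ∉ S0 := fun hp => hp1 (Finset.mem_filter.1 hp).2
        have hqS0 : q ∉ S0 := fun hq => hq1 (Finset.mem_filter.1 hq).2
        have sumpq : ∀ g : ι → ℝ, ∑ j ∈ F, w j * g j = w p * g p + w q * g q := by
          intro g
          rw [hFpq, Finset.sum_insert (by simp [hpq]), Finset.sum_singleton]
        have hcardk : (S0.card : ℝ) + (w p + w q) ≤ k := by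
          rw [splitw] at hwk
          have := sumpq (fun _ => 1)
          simp only [mul_one] at this
          linarith
        have hMq : (red q : ℝ) ≤ M := hMred q hqD
        have hMp : (red p : ℝ) ≤ M := hMred p hpD
        by_cases hle : w p + w q ≤ 1
        · refine ⟨insert p S0, Finset.insert_subset hpD hS0D, ?_, ?_, ?_⟩
          · rw [Finset.card_insert_of_notMem hpS0]
            have h3 : (S0.card : ℝ) < k := by linarith
            have h4 : S0.card < k := by exact_mod_cast h3
            omega
          · rw [Finset.sum_insert hpS0]
            rw [split (fun j => (blue j : ℝ)), sumpq (fun j => (blue j : ℝ))] at hwb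
            nlinarith [Nat.cast_nonneg (α := ℝ) (blue p), Nat.cast_nonneg (α := ℝ) (blue q)]
          · rw [Finset.sum_insert hpS0]
            rw [split (fun j => (red j : ℝ)), sumpq (fun j => (red j : ℝ))] at hwr
            nlinarith [Nat.cast_nonneg (α := ℝ) (red p), Nat.cast_nonneg (α := ℝ) (red q)]
        · push_neg at hle
          refine ⟨insert p (insert q S0), Finset.insert_subset hpD
            (Finset.insert_subset hqD hS0D), ?_, ?_, ?_⟩
          · have h3 : (S0.card : ℝ) + 1 < k := by linarith
            have h4 : S0.card + 1 < k := by exact_mod_cast h3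
            calc (insert p (insert q S0)).card ≤ (insert q S0).card + 1 :=
                  Finset.card_insert_le _ _
            _ ≤ S0.card + 1 + 1 := by gcongr <;> exact Finset.card_insert_le _ _
            _ ≤ k := by omega
          · rw [Finset.sum_insert (by simp [hpq, hpS0]), Finset.sum_insert hqS0]
            rw [split (fun j => (blue j : ℝ)), sumpq (fun j => (blue j : ℝ))] at hwb
            nlinarith [Nat.cast_nonneg (α := ℝ) (blue p), Nat.cast_nonneg (α := ℝ) (blue q)]
          · rw [Finset.sum_insert (by simp [hpq, hpS0]), Finset.sum_insert hqS0]
            rw [split (fun j => (red j : ℝ)), sumpq (fun j => (red j : ℝ))] at hwr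
            nlinarith [Nat.cast_nonneg (α := ℝ) (red p), Nat.cast_nonneg (α := ℝ) (red q)]
      rcases le_total (blue q : ℝ) (blue p) with hbl | hbl
      · exact key2 p q hpq hFpq hbl
      · exact key2 q p (Ne.symm hpq) (by rw [hFpq]; exact Finset.pair_comm p q) hbl

section helper
variable {P : Type*} [Fintype P] [MetricSpace P]

lemma mem_bal {i j : P} {ρ : ℝ} : i ∈ bal j ρ ↔ dist i j ≤ ρ := by
  simp [bal]

lemma mem_flower {i j : P} : i ∈ flower j ↔ ∃ m, dist m j ≤ 1 ∧ dist i m ≤ 1 := by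
  simp [flower, mem_bal]

lemma flower_subset_bal2 (j : P) : flower j ⊆ bal j 2 := by
  intro i hi
  rw [mem_flower] at hi
  obtain ⟨m, h1, h2⟩ := hi
  rw [mem_bal]
  calc dist i j ≤ dist i m + dist m j := dist_triangle i m j
  _ ≤ 2 := by linarith

lemma ball_disjoint {j j' : P} (h : j' ∉ flower j) : Disjoint (bal j 1) (bal j' 1) := by
  rw [Finset.disjoint_left]
  intro m hm hm'
  exact h (mem_flower.2 ⟨m, mem_bal.1 hm, by rw [dist_comm]; exact mem_bal.1 hm'⟩)

lemma exists_clustering (z : P → ℝ) (S : Finset P) :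
    ∃ (D : Finset P) (cl : P → Finset P),
      D ⊆ S ∧
      (∀ j ∈ D, cl j ⊆ flower j) ∧
      (∀ j ∈ D, ∀ p ∈ cl j, z p ≤ z j) ∧
      (∀ p ∈ S, ∃ j ∈ D, p ∈ cl j) ∧
      (∀ j ∈ D, cl j ⊆ S) ∧
      ((D : Set P)).Pairwise (fun j j' => Disjoint (cl j) (cl j')) ∧
      ((D : Set P)).Pairwise (fun j j' => Disjoint (bal j 1) (bal j' 1)) := by
  induction S using Finset.strongInduction with
  | _ S ih =>
    rcases S.eq_empty_or_nonempty with rfl | hS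
    · exact ⟨∅, fun _ => ∅, by simp⟩
    · obtain ⟨j, hjS, hjmax⟩ := S.exists_max_image z hS
      have hjfl : j ∈ flower j := mem_flower.2 ⟨j, by simp, by simp⟩
      set S' := S \ (S ∩ flower j) with hS'
      have hsub : S' ⊂ S := by
        apply Finset.sdiff_ssubset (by exact Finset.inter_subset_left) ⟨j, by simp [hjS, hjfl]⟩
      obtain ⟨D', cl', hD'S, hfl', hmax', hcov', hclS', hdisj', hbdisj'⟩ := ih S' hsub
      have hjD' : j ∉ D' := fun h => by
        have := hD'S h
        rw [hS', Finset.mem_sdiff] at this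
        exact this.2 (Finset.mem_inter.2 ⟨hjS, hjfl⟩)
      refine ⟨insert j D', Function.update cl' j (S ∩ flower j), ?_, ?_, ?_, ?_, ?_, ?_, ?_⟩
      · intro i hi
        rcases Finset.mem_insert.1 hi with rfl | hi
        · exact hjS
        · exact (Finset.sdiff_subset) (hD'S hi)
      · intro i hi
        rcases Finset.mem_insert.1 hi with rfl | hi
        · rw [Function.update_self]; exact Finset.inter_subset_right
        · rw [Function.update_of_ne (show _ ≠ j from fun h => hjD' (h ▸ hi))]; exact hfl' i hi
      · intro i hi p hp
        rcases Finset.mem_insert.1 hi with rfl | hi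
        · rw [Function.update_self] at hp
          exact hjmax p (Finset.mem_inter.1 hp).1
        · rw [Function.update_of_ne (show _ ≠ j from fun h => hjD' (h ▸ hi))] at hp
          exact hmax' i hi p hp
      · intro p hp
        by_cases hpf : p ∈ flower j
        · exact ⟨j, Finset.mem_insert_self _ _, by
            rw [Function.update_self]; exact Finset.mem_inter.2 ⟨hp, hpf⟩⟩
        · obtain ⟨i, hi, hpi⟩ := hcov' p (by simp [hS', hp, hpf])
          exact ⟨i, Finset.mem_insert_of_mem hi, by
            rw [Function.update_of_ne (show _ ≠ j from fun h => hjD' (h ▸ hi))]; exact hpi⟩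
      · intro i hi
        rcases Finset.mem_insert.1 hi with rfl | hi
        · rw [Function.update_self]; exact Finset.inter_subset_left
        · rw [Function.update_of_ne (show _ ≠ j from fun h => hjD' (h ▸ hi))]
          exact (hclS' i hi).trans (Finset.sdiff_subset)
      · rw [Finset.coe_insert]
        haveI : ∀ f : P → Finset P, Std.Symm (fun a b => Disjoint (f a) (f b)) :=
          fun f => ⟨fun a b hab => Disjoint.symm hab⟩
        rw [Set.pairwise_insert_of_symmetric]
        constructor
        · intro a ha b hb hab
          rw [Function.update_of_ne (show a ≠ j from fun h => hjD' (h ▸ ha)),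
            Function.update_of_ne (show b ≠ j from fun h => hjD' (h ▸ hb))]
          exact hdisj' ha hb hab
        intro i hi _
        rw [Function.update_self, Function.update_of_ne (show i ≠ j from fun h => hjD' (h ▸ hi))]
        refine Finset.disjoint_left.2 fun p hp hp' => ?_
        have hpS' := hclS' i hi hp'
        rw [hS', Finset.mem_sdiff] at hpS'
        exact hpS'.2 hp
      · rw [Finset.coe_insert]
        haveI : ∀ f : P → Finset P, Std.Symm (fun a b => Disjoint (f a) (f b)) :=
          fun f => ⟨fun a b hab => Disjoint.symm hab⟩
        rw [Set.pairwise_insert_of_symmetric]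
        refine ⟨hbdisj', fun i hi _ => ball_disjoint ?_⟩
        have hiS' := hD'S hi
        rw [hS', Finset.mem_sdiff] at hiS'
        exact fun hf => hiS'.2 (Finset.mem_inter.2 ⟨hiS'.1, hf⟩)

end helper

/-- given a feasible fractional solution `(x, z)` to LP1, there are at most `k`
balls of radius two covering at least `b` blue points and at least
`r − max_{j : z j > 0} |𝓕(j) ∩ R|` red points. -/
theorem stmt1 {P : Type*} [Fintype P] [MetricSpace P]
    (R B : Finset P) (hpart : ∀ p : P, (p ∈ R ∧ p ∉ B) ∨ (p ∈ B ∧ p ∉ R))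
    (k r b : ℕ) (x z : P → ℝ)
    (hx0 : ∀ i, 0 ≤ x i) (hx1 : ∀ i, x i ≤ 1)
    (hz0 : ∀ j, 0 ≤ z j) (hz1 : ∀ j, z j ≤ 1)
    (hcov : ∀ j : P, z j ≤ ∑ i ∈ bal j 1, x i)
    (hk : ∑ i : P, x i ≤ (k : ℝ))
    (hr : (r : ℝ) ≤ ∑ j ∈ R, z j)
    (hb : (b : ℝ) ≤ ∑ j ∈ B, z j) :
    ∃ C : Finset P, C.card ≤ k ∧
      (b : ℤ) ≤ ((B ∩ C.biUnion fun c => bal c 2).card : ℤ) ∧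
      (r : ℤ) - ((Finset.univ.filter fun j => 0 < z j).sup fun j => (flower j ∩ R).card : ℕ)
        ≤ ((R ∩ C.biUnion fun c => bal c 2).card : ℤ) := by
  set S : Finset P := Finset.univ.filter fun j => 0 < z j with hS
  set M : ℕ := S.sup fun j => (flower j ∩ R).card with hM
  obtain ⟨D, cl, hDS, hfl, hmaxz, hcovS, hclS, hcldisj, hbdisj⟩ := exists_clustering z S
  have colorsum : ∀ T : Finset P, ∑ j ∈ T, z j ≤ ∑ j ∈ D, z j * ((cl j ∩ T).card : ℝ) := by
    intro T
    have h1 : ∑ j ∈ T, z j = ∑ j ∈ T ∩ S, z j := by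
      apply (Finset.sum_subset Finset.inter_subset_left ?_).symm
      intro i hi hi'
      have : ¬(0 < z i) := fun h => hi' (Finset.mem_inter.2 ⟨hi, by simp [hS, h]⟩)
      linarith [hz0 i]
    have h2 : T ∩ S ⊆ D.biUnion fun j => cl j ∩ T := by
      intro p hp
      obtain ⟨hpT, hpS⟩ := Finset.mem_inter.1 hp
      obtain ⟨j, hj, hpj⟩ := hcovS p hpS
      exact Finset.mem_biUnion.2 ⟨j, hj, Finset.mem_inter.2 ⟨hpj, hpT⟩⟩
    have h3 : ∑ j ∈ T ∩ S, z j ≤ ∑ p ∈ D.biUnion (fun j => cl j ∩ T), z p :=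
      Finset.sum_le_sum_of_subset_of_nonneg h2 (fun i _ _ => hz0 i)
    have h4 : ∑ p ∈ D.biUnion (fun j => cl j ∩ T), z p
        = ∑ j ∈ D, ∑ p ∈ cl j ∩ T, z p :=
      Finset.sum_biUnion (fun a ha b hb hab =>
        (hcldisj ha hb hab).mono Finset.inter_subset_left Finset.inter_subset_left)
    have h5 : ∀ j ∈ D, ∑ p ∈ cl j ∩ T, z p ≤ z j * ((cl j ∩ T).card : ℝ) := by
      intro j hj
      calc ∑ p ∈ cl j ∩ T, z p ≤ ∑ _p ∈ cl j ∩ T, z j :=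
            Finset.sum_le_sum (fun p hp => hmaxz j hj p (Finset.mem_inter.1 hp).1)
      _ = ((cl j ∩ T).card : ℝ) * z j := by rw [Finset.sum_const, nsmul_eq_mul]
      _ = z j * ((cl j ∩ T).card : ℝ) := mul_comm _ _
    calc ∑ j ∈ T, z j = ∑ j ∈ T ∩ S, z j := h1
    _ ≤ ∑ p ∈ D.biUnion (fun j => cl j ∩ T), z p := h3
    _ = ∑ j ∈ D, ∑ p ∈ cl j ∩ T, z p := h4
    _ ≤ ∑ j ∈ D, z j * ((cl j ∩ T).card : ℝ) := Finset.sum_le_sum h5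
  obtain ⟨C, hCD, hCcard, hCb, hCr⟩ :=
    knapsack k (b : ℝ) (r : ℝ) (M : ℝ) (by positivity)
      (fun j => (cl j ∩ B).card) (fun j => (cl j ∩ R).card) D
      (fun j hj => by
        have h1 : (cl j ∩ R).card ≤ (flower j ∩ R).card :=
          Finset.card_le_card (Finset.inter_subset_inter_right (hfl j hj))
        have h2 : (flower j ∩ R).card ≤ M := by
          rw [hM]; exact Finset.le_sup (f := fun j => (flower j ∩ R).card) (hDS hj)
        exact_mod_cast h1.trans h2)
      z (fun j _ => hz0 j) (fun j _ => hz1 j)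
      (by
        calc ∑ j ∈ D, z j ≤ ∑ j ∈ D, ∑ i ∈ bal j 1, x i := Finset.sum_le_sum (fun j _ => hcov j)
        _ = ∑ i ∈ D.biUnion (fun j => bal j 1), x i := (Finset.sum_biUnion hbdisj).symm
        _ ≤ ∑ i : P, x i := Finset.sum_le_sum_of_subset_of_nonneg
            (Finset.subset_univ _) (fun i _ _ => hx0 i)
        _ ≤ (k : ℝ) := hk)
      (hb.trans (colorsum B)) (hr.trans (colorsum R))
  refine ⟨C, hCcard, ?_⟩
  -- generic counting
  have count : ∀ T : Finset P, ∑ j ∈ C, ((cl j ∩ T).card : ℝ)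
      ≤ ((T ∩ C.biUnion fun c => bal c 2).card : ℝ) := by
    intro T
    have hdisjC : ∀ a ∈ C, ∀ b ∈ C, a ≠ b → Disjoint (cl a ∩ T) (cl b ∩ T) := by
      intro a ha b hb hab
      exact (hcldisj (hCD ha) (hCD hb) hab).mono
        Finset.inter_subset_left Finset.inter_subset_left
    have hcards : ∑ j ∈ C, (cl j ∩ T).card = (C.biUnion fun j => cl j ∩ T).card :=
      (Finset.card_biUnion hdisjC).symm
    have hsub : (C.biUnion fun j => cl j ∩ T) ⊆ T ∩ C.biUnion fun c => bal c 2 := by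
      intro p hp
      obtain ⟨j, hj, hpj⟩ := Finset.mem_biUnion.1 hp
      obtain ⟨hpc, hpT⟩ := Finset.mem_inter.1 hpj
      refine Finset.mem_inter.2 ⟨hpT, Finset.mem_biUnion.2 ⟨j, hj, ?_⟩⟩
      exact flower_subset_bal2 j (hfl j (hCD hj) hpc)
    have := Finset.card_le_card hsub
    push_cast [hcards]
    rw_mod_cast [hcards]
    exact_mod_cast this
  constructor
  · have := hCb.trans (count B)
    exact_mod_cast this
  · have h := hCr.trans (count R)
    have h2 : (((r : ℤ) - (M : ℤ) : ℤ) : ℝ) ≤ (((R ∩ C.biUnion fun c => bal c 2).card : ℤ) : ℝ) := by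
      push_cast
      push_cast at h
      linarith
    exact_mod_cast h2
end

section
/- Given a colorful k-center instance and a feasible fractional solution (x, z) to LP1, there exists a set C ⊆ P with |C| ≤ k + 1 such that |B ∩ ∪_{c ∈ C} 𝓑(c, 2)| ≥ b and |R ∩ ∪_{c ∈ C} 𝓑(c, 2)| ≥ r; that is, at most k + 1 balls of radius two suffice to cover at least r red points and at least b blue points. -/
open scoped Classical
set_option maxHeartbeats 1000000

lemma exists_kernel_vec (a b : Fin 3 → ℝ) :
    ∃ v : Fin 3 → ℝ, v ≠ 0 ∧ ∑ i, a i * v i = 0 ∧ ∑ i, b i * v i = 0 ∧ ∑ i, v i ≤ 0 := by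
  have hni : ¬ LinearIndependent ℝ (fun i : Fin 3 => ![a i, b i]) := by
    intro h
    have h2 := h.fintype_card_le_finrank
    simp at h2
  obtain ⟨g, hsum, i, hgi⟩ := Fintype.not_linearIndependent_iff.mp hni
  have e0 : ∑ j, g j * a j = 0 := by
    have := congrFun hsum 0
    simpa [Finset.sum_apply] using this
  have e1 : ∑ j, g j * b j = 0 := by
    have := congrFun hsum 1
    simpa [Finset.sum_apply] using this
  by_cases hs : ∑ j, g j ≤ 0
  · refine ⟨g, ?_, ?_, ?_, hs⟩
    · intro h; exact hgi (congrFun h i)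
    · rw [← e0]; exact Finset.sum_congr rfl fun j _ => mul_comm _ _
    · rw [← e1]; exact Finset.sum_congr rfl fun j _ => mul_comm _ _
  · refine ⟨-g, ?_, ?_, ?_, ?_⟩
    · intro h
      exact hgi (neg_eq_zero.mp (congrFun h i))
    · simp only [Pi.neg_apply, mul_neg]
      rw [Finset.sum_neg_distrib, neg_eq_zero, ← e0]
      exact Finset.sum_congr rfl fun j _ => mul_comm _ _
    · simp only [Pi.neg_apply, mul_neg]
      rw [Finset.sum_neg_distrib, neg_eq_zero, ← e1]
      exact Finset.sum_congr rfl fun j _ => mul_comm _ _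
    · simp only [Pi.neg_apply, Finset.sum_neg_distrib]
      linarith [lt_of_not_ge hs]

lemma rounding {P : Type*} [Fintype P] (Rc Bc : P → ℕ) :
    ∀ n : ℕ, ∀ (k r b : ℕ) (A : Finset P) (w : P → ℝ),
      A.card + (A.filter fun s => w s ≠ 0 ∧ w s ≠ 1).card ≤ n →
      (∀ i ∈ A, 0 ≤ w i) → (∀ i ∈ A, w i ≤ 1) →
      ∑ i ∈ A, w i ≤ (k : ℝ) →
      (r : ℝ) ≤ ∑ i ∈ A, (Rc i : ℝ) * w i →
      (b : ℝ) ≤ ∑ i ∈ A, (Bc i : ℝ) * w i →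
      ∃ S, S ⊆ A ∧ S.card ≤ k + 1 ∧ (r : ℝ) ≤ ∑ i ∈ S, (Rc i : ℝ) ∧
        (b : ℝ) ≤ ∑ i ∈ S, (Bc i : ℝ) := by
  intro n
  induction n with
  | zero =>
    intro k r b A w hn hw0 hw1 hk hr hb
    have hA : A = ∅ := Finset.card_eq_zero.mp (by omega)
    subst hA
    simp only [Finset.sum_empty] at hr hb
    refine ⟨∅, Finset.Subset.refl _, by simp, ?_, ?_⟩ <;> simp_all
  | succ n ih =>
    intro k r b A w hn hw0 hw1 hk hr hb
    by_cases hz : ∃ s ∈ A, w s = 0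
    · obtain ⟨s, hs, hws⟩ := hz
      have hfsub : (A.erase s).filter (fun p => w p ≠ 0 ∧ w p ≠ 1) ⊆
          A.filter (fun p => w p ≠ 0 ∧ w p ≠ 1) :=
        Finset.filter_subset_filter _ (Finset.erase_subset _ _)
      have hcard := Finset.card_le_card hfsub
      have hce := Finset.card_erase_of_mem hs
      have hApos := Finset.card_pos.mpr ⟨s, hs⟩
      obtain ⟨S, hSsub, hScard, hSr, hSb⟩ :=
        ih k r b (A.erase s) w (by omega)
          (fun i hi => hw0 i (Finset.mem_of_mem_erase hi))
          (fun i hi => hw1 i (Finset.mem_of_mem_erase hi))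
          (by rw [Finset.sum_erase_eq_sub hs, hws]; linarith)
          (by rw [Finset.sum_erase_eq_sub hs, hws]; simpa using hr)
          (by rw [Finset.sum_erase_eq_sub hs, hws]; simpa using hb)
      exact ⟨S, hSsub.trans (Finset.erase_subset _ _), hScard, hSr, hSb⟩
    · by_cases ho : ∃ s ∈ A, w s = 1
      · obtain ⟨s, hs, hws⟩ := ho
        have h1k : (1 : ℝ) ≤ (k : ℝ) := by
          have := Finset.single_le_sum (f := w) (fun i hi => hw0 i hi) hs
          linarith
        have hk1 : 1 ≤ k := by exact_mod_cast h1k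
        have hfsub : (A.erase s).filter (fun p => w p ≠ 0 ∧ w p ≠ 1) ⊆
            A.filter (fun p => w p ≠ 0 ∧ w p ≠ 1) :=
          Finset.filter_subset_filter _ (Finset.erase_subset _ _)
        have hcard := Finset.card_le_card hfsub
        have hce := Finset.card_erase_of_mem hs
        have hApos := Finset.card_pos.mpr ⟨s, hs⟩
        have hsumnnR : (0:ℝ) ≤ ∑ i ∈ A.erase s, (Rc i : ℝ) * w i :=
          Finset.sum_nonneg fun i hi =>
            mul_nonneg (by positivity) (hw0 i (Finset.mem_of_mem_erase hi))
        have hsumnnB : (0:ℝ) ≤ ∑ i ∈ A.erase s, (Bc i : ℝ) * w i :=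
          Finset.sum_nonneg fun i hi =>
            mul_nonneg (by positivity) (hw0 i (Finset.mem_of_mem_erase hi))
        obtain ⟨S, hSsub, hScard, hSr, hSb⟩ :=
          ih (k - 1) (r - Rc s) (b - Bc s) (A.erase s) w (by omega)
            (fun i hi => hw0 i (Finset.mem_of_mem_erase hi))
            (fun i hi => hw1 i (Finset.mem_of_mem_erase hi))
            (by
              rw [Finset.sum_erase_eq_sub hs, hws]
              rw [Nat.cast_sub hk1]
              push_cast; linarith)
            (by
              rcases le_or_gt (Rc s) r with h | h
              · rw [Nat.cast_sub h, Finset.sum_erase_eq_sub hs, hws]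
                push_cast; linarith
              · rw [Nat.sub_eq_zero_of_le h.le]
                simpa using hsumnnR)
            (by
              rcases le_or_gt (Bc s) b with h | h
              · rw [Nat.cast_sub h, Finset.sum_erase_eq_sub hs, hws]
                push_cast; linarith
              · rw [Nat.sub_eq_zero_of_le h.le]
                simpa using hsumnnB)
        have hsS : s ∉ S := fun hmem => (Finset.mem_erase.mp (hSsub hmem)).1 rfl
        refine ⟨insert s S, ?_, ?_, ?_, ?_⟩
        · exact Finset.insert_subset hs (hSsub.trans (Finset.erase_subset _ _))
        · rw [Finset.card_insert_of_notMem hsS]; omega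
        · rw [Finset.sum_insert hsS]
          have : (r:ℝ) ≤ (Rc s : ℝ) + ((r - Rc s : ℕ) : ℝ) := by
            have : r ≤ Rc s + (r - Rc s) := by omega
            exact_mod_cast this
          linarith
        · rw [Finset.sum_insert hsS]
          have : (b:ℝ) ≤ (Bc s : ℝ) + ((b - Bc s : ℕ) : ℝ) := by
            have : b ≤ Bc s + (b - Bc s) := by omega
            exact_mod_cast this
          linarith
      · push_neg at hz ho
        have hfrac : ∀ p ∈ A, 0 < w p ∧ w p < 1 := fun p hp =>
          ⟨lt_of_le_of_ne (hw0 p hp) (Ne.symm (hz p hp)),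
           lt_of_le_of_ne (hw1 p hp) (ho p hp)⟩
        by_cases hcA : A.card ≤ k + 1
        · refine ⟨A, Finset.Subset.refl _, hcA, ?_, ?_⟩
          · refine le_trans hr (Finset.sum_le_sum fun i hi => ?_)
            calc (Rc i : ℝ) * w i ≤ (Rc i : ℝ) * 1 :=
                  mul_le_mul_of_nonneg_left (hw1 i hi) (by positivity)
            _ = (Rc i : ℝ) := mul_one _
          · refine le_trans hb (Finset.sum_le_sum fun i hi => ?_)
            calc (Bc i : ℝ) * w i ≤ (Bc i : ℝ) * 1 :=
                  mul_le_mul_of_nonneg_left (hw1 i hi) (by positivity)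
            _ = (Bc i : ℝ) := mul_one _
        · -- perturbation case
          push_neg at hcA
          have hApos : 0 < A.card := by omega
          have hAne : A.Nonempty := Finset.card_pos.mp hApos
          have hkpos : 0 < k := by
            by_contra hk0
            have hk0' : k = 0 := by omega
            have : (0:ℝ) < ∑ i ∈ A, w i :=
              Finset.sum_pos (fun i hi => (hfrac i hi).1) hAne
            rw [hk0'] at hk
            simp at hk
            linarith
          have hA3 : 3 ≤ A.card := by omega
          obtain ⟨s, hs⟩ := hAne
          have h2 : 1 ≤ (A.erase s).card := by
            rw [Finset.card_erase_of_mem hs]; omega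
          obtain ⟨t, ht'⟩ := Finset.card_pos.mp (by omega : 0 < (A.erase s).card)
          have ht : t ∈ A := Finset.mem_of_mem_erase ht'
          have hts : t ≠ s := (Finset.mem_erase.mp ht').1
          have h3 : 0 < ((A.erase s).erase t).card := by
            rw [Finset.card_erase_of_mem ht', Finset.card_erase_of_mem hs]; omega
          obtain ⟨u, hu'⟩ := Finset.card_pos.mp h3
          have hu : u ∈ A := Finset.mem_of_mem_erase (Finset.mem_of_mem_erase hu')
          have hut : u ≠ t := (Finset.mem_erase.mp hu').1
          have hus : u ≠ s := (Finset.mem_erase.mp (Finset.mem_of_mem_erase hu')).1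
          obtain ⟨c, hc0, hc1, hc2⟩ :
              ∃ c : Fin 3 → P, c 0 = s ∧ c 1 = t ∧ c 2 = u := ⟨![s, t, u], rfl, rfl, rfl⟩
          have hcmem : ∀ i, c i ∈ A := by
            intro i; fin_cases i <;> simp [hc0, hc1, hc2] <;> assumption
          obtain ⟨v, hv0, hva, hvb, hvs⟩ :=
            exists_kernel_vec (fun i => (Rc (c i) : ℝ)) (fun i => (Bc (c i) : ℝ))
          have hva' : (Rc s : ℝ) * v 0 + (Rc t : ℝ) * v 1 + (Rc u : ℝ) * v 2 = 0 := by
            rw [Fin.sum_univ_three] at hva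
            rwa [hc0, hc1, hc2] at hva
          have hvb' : (Bc s : ℝ) * v 0 + (Bc t : ℝ) * v 1 + (Bc u : ℝ) * v 2 = 0 := by
            rw [Fin.sum_univ_three] at hvb
            rwa [hc0, hc1, hc2] at hvb
          have hvs' : v 0 + v 1 + v 2 ≤ 0 := by rwa [Fin.sum_univ_three] at hvs
          obtain ⟨δ, hδs, hδt, hδu, hδ0⟩ :
              ∃ δ : P → ℝ, δ s = v 0 ∧ δ t = v 1 ∧ δ u = v 2 ∧
                ∀ p, p ≠ s → p ≠ t → p ≠ u → δ p = 0 :=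
            ⟨fun p => if p = s then v 0 else if p = t then v 1 else if p = u then v 2 else 0,
              by simp, by simp [hts], by simp [hus, hut],
              fun p h1 h2 h3 => by simp [h1, h2, h3]⟩
          have hδc : ∀ i, δ (c i) = v i := by
            intro i; fin_cases i <;> simp [hc0, hc1, hc2, hδs, hδt, hδu]
          have hkey : ∀ f : P → ℝ, ∑ i ∈ A, f i * δ i =
              f s * v 0 + f t * v 1 + f u * v 2 := by
            intro f
            have hTA : ({s, t, u} : Finset P) ⊆ A := by
              intro p hp
              simp only [Finset.mem_insert, Finset.mem_singleton] at hp
              rcases hp with h | h | h <;> subst h <;> assumption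
            rw [← Finset.sum_subset hTA]
            · rw [Finset.sum_insert (by simp [hts.symm, hus.symm]),
                Finset.sum_insert (by simp [hut.symm]), Finset.sum_singleton,
                hδs, hδt, hδu]
              ring
            · intro p _ hpT
              simp only [Finset.mem_insert, Finset.mem_singleton, not_or] at hpT
              obtain ⟨h1, h2, h3⟩ := hpT
              rw [hδ0 p h1 h2 h3, mul_zero]
          have hkeyδ : ∑ i ∈ A, δ i = v 0 + v 1 + v 2 := by
            have := hkey (fun _ => 1)
            simpa using this
          obtain ⟨ε, hεpos, hbnd, i0, hvi0, hhit⟩ :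
              ∃ ε : ℝ, 0 < ε ∧
                (∀ i : Fin 3, 0 ≤ w (c i) + ε * v i ∧ w (c i) + ε * v i ≤ 1) ∧
                ∃ i0 : Fin 3, v i0 ≠ 0 ∧
                  (w (c i0) + ε * v i0 = 0 ∨ w (c i0) + ε * v i0 = 1) := by
            classical
            set F : Finset (Fin 3) := Finset.univ.filter (fun i => v i ≠ 0) with hF
            have hFne : F.Nonempty := by
              obtain ⟨i, hi⟩ := Function.ne_iff.mp hv0
              refine ⟨i, ?_⟩
              simp only [hF, Finset.mem_filter, Finset.mem_univ, true_and]
              simpa using hi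
            set step : Fin 3 → ℝ := fun i =>
              if 0 < v i then (1 - w (c i)) / v i else w (c i) / (-v i) with hstep
            have hεpos : 0 < F.inf' hFne step := by
              rw [Finset.lt_inf'_iff]
              intro i hi
              have hvi : v i ≠ 0 := by simpa [hF] using hi
              obtain ⟨hw0', hw1'⟩ := hfrac (c i) (hcmem i)
              rcases lt_or_gt_of_ne hvi with h | h
              · rw [hstep]; simp only [if_neg (not_lt.mpr h.le)]
                exact div_pos hw0' (by linarith)
              · rw [hstep]; simp only [if_pos h]
                exact div_pos (by linarith) h
            have hεstep : ∀ i ∈ F, F.inf' hFne step ≤ step i :=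
              fun i hi => Finset.inf'_le _ hi
            refine ⟨F.inf' hFne step, hεpos, ?_, ?_⟩
            · intro i
              obtain ⟨hwp0, hwp1⟩ := hfrac (c i) (hcmem i)
              rcases lt_trichotomy (v i) 0 with h | h | h
              · have hiF : i ∈ F := by simp [hF, h.ne]
                have hle := hεstep i hiF
                rw [hstep] at hle
                simp only [if_neg (not_lt.mpr h.le)] at hle
                have hεv : F.inf' hFne step * (-v i) ≤ w (c i) := by
                  rw [← le_div_iff₀ (by linarith : (0:ℝ) < -v i)]
                  exact hle
                constructor
                · nlinarith
                · nlinarith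
              · simp only [h, mul_zero, add_zero]
                exact ⟨hwp0.le, hwp1.le⟩
              · have hiF : i ∈ F := by simp [hF, h.ne']
                have hle := hεstep i hiF
                rw [hstep] at hle
                simp only [if_pos h] at hle
                have hεv : F.inf' hFne step * v i ≤ 1 - w (c i) := by
                  rw [← le_div_iff₀ h]
                  exact hle
                constructor
                · nlinarith
                · nlinarith
            · obtain ⟨i0, hi0F, hi0⟩ := Finset.exists_mem_eq_inf' hFne step
              have hvi0 : v i0 ≠ 0 := by simpa [hF] using hi0F
              refine ⟨i0, hvi0, ?_⟩
              rcases lt_or_gt_of_ne hvi0 with h | h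
              · left
                rw [hi0, hstep]
                simp only [if_neg (not_lt.mpr h.le)]
                have hcan : w (c i0) / -v i0 * v i0 = -(w (c i0)) := by
                  rw [div_mul_eq_mul_div, mul_div_assoc, div_neg, div_self hvi0,
                    mul_neg, mul_one]
                rw [hcan]; ring
              · right
                rw [hi0, hstep]
                simp only [if_pos h]
                field_simp
                ring
          obtain ⟨w', hw'p⟩ :
              ∃ w' : P → ℝ, ∀ p, w' p = w p + ε * δ p := ⟨_, fun _ => rfl⟩
          have hw'0 : ∀ p ∈ A, 0 ≤ w' p := by
            intro p hp
            by_cases h1 : p = s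
            · rw [hw'p, h1, hδs]
              have := (hbnd 0).1; rwa [hc0] at this
            · by_cases h2 : p = t
              · rw [hw'p, h2, hδt]
                have := (hbnd 1).1; rwa [hc1] at this
              · by_cases h3 : p = u
                · rw [hw'p, h3, hδu]
                  have := (hbnd 2).1; rwa [hc2] at this
                · rw [hw'p, hδ0 p h1 h2 h3, mul_zero, add_zero]
                  exact hw0 p hp
          have hw'1 : ∀ p ∈ A, w' p ≤ 1 := by
            intro p hp
            by_cases h1 : p = s
            · rw [hw'p, h1, hδs]
              have := (hbnd 0).2; rwa [hc0] at this
            · by_cases h2 : p = t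
              · rw [hw'p, h2, hδt]
                have := (hbnd 1).2; rwa [hc1] at this
              · by_cases h3 : p = u
                · rw [hw'p, h3, hδu]
                  have := (hbnd 2).2; rwa [hc2] at this
                · rw [hw'p, hδ0 p h1 h2 h3, mul_zero, add_zero]
                  exact hw1 p hp
          have hsum_split : ∀ f : P → ℝ, ∑ i ∈ A, f i * w' i =
              ∑ i ∈ A, f i * w i + ε * (f s * v 0 + f t * v 1 + f u * v 2) := by
            intro f
            rw [← hkey f, Finset.mul_sum, ← Finset.sum_add_distrib]
            refine Finset.sum_congr rfl fun i _ => ?_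
            rw [hw'p]; ring
          have hone : ∑ i ∈ A, w' i ≤ (k : ℝ) := by
            have hsp : ∑ i ∈ A, w' i = ∑ i ∈ A, w i + ε * ∑ i ∈ A, δ i := by
              rw [Finset.mul_sum, ← Finset.sum_add_distrib]
              exact Finset.sum_congr rfl fun i _ => hw'p i
            rw [hsp, hkeyδ]
            nlinarith
          have hrnew : (r : ℝ) ≤ ∑ i ∈ A, (Rc i : ℝ) * w' i := by
            rw [hsum_split (fun i => (Rc i : ℝ)), hva', mul_zero, add_zero]
            exact hr
          have hbnew : (b : ℝ) ≤ ∑ i ∈ A, (Bc i : ℝ) * w' i := by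
            rw [hsum_split (fun i => (Bc i : ℝ)), hvb', mul_zero, add_zero]
            exact hb
          have hbd : w' (c i0) = 0 ∨ w' (c i0) = 1 := by
            rw [hw'p, hδc]
            exact hhit
          have hfilt_old : A.filter (fun p => w p ≠ 0 ∧ w p ≠ 1) = A := by
            apply Finset.filter_true_of_mem
            intro p hp
            exact ⟨hz p hp, ho p hp⟩
          have hfilt_new : A.filter (fun p => w' p ≠ 0 ∧ w' p ≠ 1) ⊆ A.erase (c i0) := by
            intro p hp
            obtain ⟨hpA, hp01⟩ := Finset.mem_filter.mp hp
            rw [Finset.mem_erase]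
            refine ⟨?_, hpA⟩
            intro heq
            subst heq
            rcases hbd with h | h
            · exact hp01.1 h
            · exact hp01.2 h
          have hmeas : A.card + (A.filter (fun p => w' p ≠ 0 ∧ w' p ≠ 1)).card ≤ n := by
            have h1 := Finset.card_le_card hfilt_new
            have h2 := Finset.card_erase_of_mem (hcmem i0)
            rw [hfilt_old] at hn
            omega
          exact ih k r b A w' hmeas hw'0 hw'1 hone hrnew hbnew

lemma clustering {P : Type*} [Fintype P] [MetricSpace P] (z : P → ℝ) :
    ∀ (n : ℕ) (Q : Finset P), Q.card ≤ n → ∃ (C0 : Finset P) (f : P → P),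
      C0 ⊆ Q ∧
      (∀ j ∈ Q, f j ∈ C0 ∧ dist j (f j) ≤ 2 ∧ z j ≤ z (f j)) ∧
      (∀ c ∈ C0, ∀ c' ∈ C0, c ≠ c' → 2 < dist c c') := by
  intro n
  induction n with
  | zero =>
    intro Q hQ
    have : Q = ∅ := Finset.card_eq_zero.mp (by omega)
    subst this
    exact ⟨∅, id, Finset.Subset.refl _, by simp, by simp⟩
  | succ n ih =>
    intro Q hQ
    rcases Finset.eq_empty_or_nonempty Q with hQe | hQne
    · subst hQe
      exact ⟨∅, id, Finset.Subset.refl _, by simp, by simp⟩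
    · obtain ⟨c, hc, hcmax⟩ := Finset.exists_max_image Q z hQne
      set Q' : Finset P := Q.filter (fun j => ¬ dist j c ≤ 2) with hQ'def
      have hQ'sub : Q' ⊆ Q := Finset.filter_subset _ _
      have hcQ' : c ∉ Q' := by
        simp [hQ'def, dist_self]
      have hQ'card : Q'.card ≤ n := by
        have : Q'.card < Q.card :=
          Finset.card_lt_card (Finset.ssubset_iff_of_subset hQ'sub |>.mpr ⟨c, hc, hcQ'⟩)
        omega
      obtain ⟨C0', f', hsub', hf', hsep'⟩ := ih Q' hQ'card
      refine ⟨insert c C0', fun j => if dist j c ≤ 2 then c else f' j, ?_, ?_, ?_⟩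
      · exact Finset.insert_subset hc (hsub'.trans hQ'sub)
      · intro j hj
        by_cases hd : dist j c ≤ 2
        · simp only [if_pos hd]
          exact ⟨Finset.mem_insert_self _ _, hd, hcmax j hj⟩
        · simp only [if_neg hd]
          have hjQ' : j ∈ Q' := by
            simp only [hQ'def, Finset.mem_filter]
            exact ⟨hj, hd⟩
          obtain ⟨h1, h2, h3⟩ := hf' j hjQ'
          exact ⟨Finset.mem_insert_of_mem h1, h2, h3⟩
      · intro c1 hc1 c2 hc2 hne
        rcases Finset.mem_insert.mp hc1 with h1 | h1
        · rcases Finset.mem_insert.mp hc2 with h2 | h2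
          · exact absurd (h1.trans h2.symm) hne
          · subst h1
            have : c2 ∈ Q' := hsub' h2
            have := (Finset.mem_filter.mp this).2
            rw [dist_comm]
            linarith [lt_of_not_ge this]
        · rcases Finset.mem_insert.mp hc2 with h2 | h2
          · subst h2
            have : c1 ∈ Q' := hsub' h1
            have := (Finset.mem_filter.mp this).2
            linarith [lt_of_not_ge this]
          · exact hsep' c1 h1 c2 h2 hne


/-- given a feasible fractional solution `(x, z)` to LP1, at most `k + 1` balls of
radius two suffice to cover at least `r` red points and at least `b` blue points. -/
theorem stmt2 {P : Type*} [Fintype P] [MetricSpace P]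
    (R B : Finset P) (hpart : ∀ p : P, (p ∈ R ∧ p ∉ B) ∨ (p ∈ B ∧ p ∉ R))
    (k r b : ℕ) (x z : P → ℝ)
    (hx0 : ∀ i, 0 ≤ x i) (hx1 : ∀ i, x i ≤ 1)
    (hz0 : ∀ j, 0 ≤ z j) (hz1 : ∀ j, z j ≤ 1)
    (hcov : ∀ j : P, z j ≤ ∑ i ∈ bal j 1, x i)
    (hk : ∑ i : P, x i ≤ (k : ℝ))
    (hr : (r : ℝ) ≤ ∑ j ∈ R, z j)
    (hb : (b : ℝ) ≤ ∑ j ∈ B, z j) :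
    ∃ C : Finset P, C.card ≤ k + 1 ∧
      b ≤ (B ∩ C.biUnion fun c => bal c 2).card ∧
      r ≤ (R ∩ C.biUnion fun c => bal c 2).card := by
  classical
  obtain ⟨C0, f, hC0, hf, hsep⟩ := clustering z Finset.univ.card Finset.univ le_rfl
  have hfmem : ∀ j : P, f j ∈ C0 := fun j => (hf j (Finset.mem_univ j)).1
  have hfdist : ∀ j : P, dist j (f j) ≤ 2 := fun j => (hf j (Finset.mem_univ j)).2.1
  have hfz : ∀ j : P, z j ≤ z (f j) := fun j => (hf j (Finset.mem_univ j)).2.2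
  have hzw : ∀ j : P, z j ≤ min 1 (∑ i ∈ bal (f j) 1, x i) :=
    fun j => le_min (hz1 j) ((hfz j).trans (hcov (f j)))
  have hdisj : (↑C0 : Set P).PairwiseDisjoint (fun c => bal c 1) := by
    intro c hc c' hc' hne
    simp only [Function.onFun]
    rw [Finset.disjoint_left]
    intro i hi hi'
    have h1 : dist i c ≤ 1 := (Finset.mem_filter.mp hi).2
    have h2 : dist i c' ≤ 1 := (Finset.mem_filter.mp hi').2
    have h3 := hsep c (Finset.mem_coe.mp hc) c' (Finset.mem_coe.mp hc') hne
    have h4 : dist c c' ≤ dist c i + dist i c' := dist_triangle _ _ _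
    rw [dist_comm c i] at h4
    linarith
  have hksum : ∑ c ∈ C0, min 1 (∑ i ∈ bal c 1, x i) ≤ (k : ℝ) := by
    have h1 : ∑ c ∈ C0, min 1 (∑ i ∈ bal c 1, x i) ≤ ∑ c ∈ C0, ∑ i ∈ bal c 1, x i :=
      Finset.sum_le_sum fun c _ => min_le_right _ _
    have h2 : ∑ i ∈ C0.biUnion (fun c => bal c 1), x i = ∑ c ∈ C0, ∑ i ∈ bal c 1, x i :=
      Finset.sum_biUnion hdisj
    have h3 : ∑ i ∈ C0.biUnion (fun c => bal c 1), x i ≤ ∑ i : P, x i :=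
      Finset.sum_le_sum_of_subset_of_nonneg (Finset.subset_univ _) (fun i _ _ => hx0 i)
    linarith
  have hcover : ∀ (T : Finset P) (m : ℕ), (m : ℝ) ≤ ∑ j ∈ T, z j →
      (m : ℝ) ≤ ∑ c ∈ C0, ((T.filter (fun j => f j = c)).card : ℝ) *
        min 1 (∑ i ∈ bal c 1, x i) := by
    intro T m hm
    refine hm.trans ?_
    rw [← Finset.sum_fiberwise_of_maps_to (fun j _ => hfmem j) z]
    refine Finset.sum_le_sum fun c _ => ?_
    have hbound : ∀ j ∈ T.filter (fun j => f j = c), z j ≤ min 1 (∑ i ∈ bal c 1, x i) := by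
      intro j hj
      have hfj : f j = c := (Finset.mem_filter.mp hj).2
      have := hzw j
      rwa [hfj] at this
    calc ∑ j ∈ T.filter (fun j => f j = c), z j
        ≤ (T.filter (fun j => f j = c)).card • min 1 (∑ i ∈ bal c 1, x i) :=
          Finset.sum_le_card_nsmul _ _ _ hbound
      _ = ((T.filter (fun j => f j = c)).card : ℝ) * min 1 (∑ i ∈ bal c 1, x i) :=
          nsmul_eq_mul _ _
  obtain ⟨S, hSsub, hScard, hSr, hSb⟩ :=
    rounding (fun c => (R.filter (fun j => f j = c)).card)
      (fun c => (B.filter (fun j => f j = c)).card) _ k r b C0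
      (fun c => min 1 (∑ i ∈ bal c 1, x i)) le_rfl
      (fun c _ => le_min zero_le_one (Finset.sum_nonneg fun i _ => hx0 i))
      (fun c _ => min_le_left _ _) hksum (hcover R r hr) (hcover B b hb)
  have hfinal : ∀ (T : Finset P) (m : ℕ),
      (m : ℝ) ≤ ∑ c ∈ S, ((T.filter (fun j => f j = c)).card : ℝ) →
      m ≤ (T ∩ S.biUnion fun c => bal c 2).card := by
    intro T m hm
    have hnat : m ≤ ∑ c ∈ S, (T.filter (fun j => f j = c)).card := by exact_mod_cast hm
    have hdisjfib : ∀ c ∈ S, ∀ c' ∈ S, c ≠ c' →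
        Disjoint (T.filter (fun j => f j = c)) (T.filter (fun j => f j = c')) := by
      intro c _ c' _ hne
      rw [Finset.disjoint_left]
      intro j hj hj'
      exact hne ((Finset.mem_filter.mp hj).2.symm.trans (Finset.mem_filter.mp hj').2)
    have hcard : ∑ c ∈ S, (T.filter (fun j => f j = c)).card =
        (S.biUnion fun c => T.filter (fun j => f j = c)).card :=
      (Finset.card_biUnion hdisjfib).symm
    have hsubset : (S.biUnion fun c => T.filter (fun j => f j = c)) ⊆
        T ∩ S.biUnion (fun c => bal c 2) := by
      intro j hj
      obtain ⟨c, hcS, hjf⟩ := Finset.mem_biUnion.mp hj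
      obtain ⟨hjT, hfj⟩ := Finset.mem_filter.mp hjf
      refine Finset.mem_inter.mpr ⟨hjT, Finset.mem_biUnion.mpr ⟨c, hcS, ?_⟩⟩
      simp only [bal, Finset.mem_filter, Finset.mem_univ, true_and]
      rw [← hfj]
      exact hfdist j
    have := Finset.card_le_card hsubset
    omega
  exact ⟨S, hScard, hfinal B b hSb, hfinal R r hSr⟩
end

section
/- Let OPT ⊆ P be well-separated. If c, p ∈ OPT are distinct and q ∈ 𝓑(c), then 𝓑(p) ∩ 𝓕(q) = ∅; i.e., the unit ball around any optimal center other than c is disjoint from the flower centered at any point of the unit ball around c. -/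
open scoped Classical

/-- A set `OPT` is well-separated if no ball of radius three covers two unit balls centered
at distinct points of `OPT`. -/
def WellSeparated {P : Type*} [Fintype P] [MetricSpace P] (OPT : Finset P) : Prop :=
  ¬ ∃ (q : P) (c c' : P), c ∈ OPT ∧ c' ∈ OPT ∧ c ≠ c' ∧ bal c 1 ∪ bal c' 1 ⊆ bal q 3

/-- if `OPT` is well-separated, `c, p ∈ OPT` are distinct and `q ∈ 𝓑(c)`,
then `𝓑(p) ∩ 𝓕(q) = ∅`. -/
theorem stmt4 {P : Type*} [Fintype P] [MetricSpace P]
    (OPT : Finset P) (hsep : WellSeparated OPT)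
    (c p : P) (hc : c ∈ OPT) (hp : p ∈ OPT) (hne : c ≠ p)
    (q : P) (hq : q ∈ bal c 1) :
    bal p 1 ∩ flower q = ∅ := by
  by_contra h
  obtain ⟨x, hx⟩ := Finset.nonempty_iff_ne_empty.mpr h
  rw [Finset.mem_inter] at hx
  obtain ⟨hxp, hxf⟩ := hx
  simp only [flower, Finset.mem_biUnion] at hxf
  obtain ⟨i, hiq, hxi⟩ := hxf
  simp only [bal, Finset.mem_filter, Finset.mem_univ, true_and] at hxp hiq hxi hq
  apply hsep
  refine ⟨i, c, p, hc, hp, hne, ?_⟩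
  intro y hy
  simp only [bal, Finset.mem_filter, Finset.mem_univ, true_and, Finset.mem_union] at hy ⊢
  rcases hy with hy | hy
  · calc dist y i ≤ dist y c + dist c i := dist_triangle _ _ _
      _ ≤ 1 + (dist c q + dist q i) := by
          have := dist_triangle c q i
          linarith
      _ ≤ 3 := by
          rw [dist_comm c q, dist_comm q i]
          linarith
  · calc dist y i ≤ dist y p + dist p x + dist x i := dist_triangle4 _ _ _ _
      _ ≤ 3 := by rw [dist_comm p x]; linarith
end

section
/- Let P_4 ⊆ P, τ ∈ ℕ, and let c ∈ P_4 be a point such that |Gain(c, q) ∩ P_4| ≤ τ for every q ∈ 𝓑(c). Let P_s ⊆ P_4 with c ∈ P_s, let j ∈ P_s be a dense point (i.e., |R ∩ 𝓑(j) ∩ P_s| > 2τ), let I_j = {i ∈ P_s : |R ∩ 𝓑(i) ∩ 𝓑(j) ∩ P_s| > τ}, and let D_j = ∪_{i ∈ I_j} 𝓑(i) ∩ P_s. Then either c ∈ I_j or 𝓑(c) ∩ D_j = ∅. -/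
open scoped Classical

/-- `Gain(p, q)`: the set of red points added to `𝓑(p)` by forming a flower centered at `q`. -/
noncomputable def gain {P : Type*} [Fintype P] [MetricSpace P] (R : Finset P) (p q : P) :
    Finset P :=
  R ∩ (flower q \ bal p 1)

/-- if `c` has all gains in `P₄` bounded by `τ`, `j ∈ P_s` is a dense point,
`I_j` is the set of points whose unit balls intersect `𝓑(j)` in more than `τ` red points
of `P_s`, and `D_j = ∪_{i ∈ I_j} 𝓑(i) ∩ P_s`, then either `c ∈ I_j` or `𝓑(c) ∩ D_j = ∅`. -/
theorem stmt6 {P : Type*} [Fintype P] [MetricSpace P]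
    (R B : Finset P) (hpart : ∀ p : P, (p ∈ R ∧ p ∉ B) ∨ (p ∈ B ∧ p ∉ R))
    (P₄ : Finset P) (τ : ℕ)
    (c : P) (hcP₄ : c ∈ P₄)
    (hgain : ∀ q ∈ bal c 1, (gain R c q ∩ P₄).card ≤ τ)
    (Ps : Finset P) (hPs : Ps ⊆ P₄) (hcPs : c ∈ Ps)
    (j : P) (hj : j ∈ Ps) (hdense : 2 * τ < (R ∩ bal j 1 ∩ Ps).card)
    (Ij Dj : Finset P)
    (hIj : Ij = Ps.filter fun i => τ < (R ∩ bal i 1 ∩ bal j 1 ∩ Ps).card)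
    (hDj : Dj = Ij.biUnion fun i => bal i 1 ∩ Ps) :
    c ∈ Ij ∨ bal c 1 ∩ Dj = ∅ := by
  have mem_bal : ∀ (x y : P) (ρ : ℝ), x ∈ bal y ρ ↔ dist x y ≤ ρ := by
    intro x y ρ; simp [bal]
  have ball_sub_flower : ∀ (i q : P), dist i q ≤ 1 → bal i 1 ⊆ flower q := by
    intro i q h x hx
    exact Finset.mem_biUnion.2 ⟨i, (mem_bal i q 1).2 h, hx⟩
  by_cases hD : bal c 1 ∩ Dj = ∅
  · exact Or.inr hD
  left
  obtain ⟨q, hq⟩ := Finset.nonempty_iff_ne_empty.2 hD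
  rw [Finset.mem_inter] at hq
  obtain ⟨hqc, hqD⟩ := hq
  rw [hDj, Finset.mem_biUnion] at hqD
  obtain ⟨i, hiIj, hqi⟩ := hqD
  rw [Finset.mem_inter] at hqi
  rw [hIj, Finset.mem_filter] at hiIj
  obtain ⟨hiPs, hicard⟩ := hiIj
  set S : Finset P := R ∩ bal i 1 ∩ bal j 1 ∩ Ps with hS
  -- S \ bal c 1 ⊆ gain R c q ∩ P₄
  have hsub1 : S \ bal c 1 ⊆ gain R c q ∩ P₄ := by
    intro x hx
    rw [Finset.mem_sdiff] at hx
    obtain ⟨hxS, hxc⟩ := hx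
    simp only [hS, Finset.mem_inter] at hxS
    obtain ⟨⟨⟨hxR, hxi⟩, hxj⟩, hxPs⟩ := hxS
    have hflo : x ∈ flower q := by
      have : dist i q ≤ 1 := by
        rw [dist_comm]; exact (mem_bal q i 1).1 hqi.1
      exact ball_sub_flower i q this hxi
    refine Finset.mem_inter.2 ⟨Finset.mem_inter.2 ⟨hxR, Finset.mem_sdiff.2 ⟨hflo, hxc⟩⟩, hPs hxPs⟩
  have hcard1 : (S \ bal c 1).card ≤ τ :=
    le_trans (Finset.card_le_card hsub1) (hgain q hqc)
  -- hence S ∩ bal c 1 is nonempty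
  have hne : (S ∩ bal c 1).Nonempty := by
    rw [Finset.nonempty_iff_ne_empty]
    intro hemp
    have : S ⊆ S \ bal c 1 := by
      intro x hx
      refine Finset.mem_sdiff.2 ⟨hx, fun hxc => ?_⟩
      have : x ∈ S ∩ bal c 1 := Finset.mem_inter.2 ⟨hx, hxc⟩
      rw [hemp] at this; exact absurd this (Finset.notMem_empty x)
    exact absurd (le_trans (Finset.card_le_card this) hcard1) (not_le.2 hicard)
  obtain ⟨y, hy⟩ := hne
  rw [Finset.mem_inter] at hy
  obtain ⟨hyS, hyc⟩ := hy
  simp only [hS, Finset.mem_inter] at hyS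
  obtain ⟨⟨⟨hyR, hyi⟩, hyj⟩, hyPs⟩ := hyS
  set U : Finset P := R ∩ bal j 1 ∩ Ps with hU
  have hsub2 : U \ bal c 1 ⊆ gain R c y ∩ P₄ := by
    intro x hx
    rw [Finset.mem_sdiff] at hx
    obtain ⟨hxU, hxc⟩ := hx
    simp only [hU, Finset.mem_inter] at hxU
    obtain ⟨⟨hxR, hxj⟩, hxPs⟩ := hxU
    have hflo : x ∈ flower y := by
      have : dist j y ≤ 1 := by
        rw [dist_comm]; exact (mem_bal y j 1).1 hyj
      exact ball_sub_flower j y this hxj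
    refine Finset.mem_inter.2 ⟨Finset.mem_inter.2 ⟨hxR, Finset.mem_sdiff.2 ⟨hflo, hxc⟩⟩, hPs hxPs⟩
  have hcard2 : (U \ bal c 1).card ≤ τ :=
    le_trans (Finset.card_le_card hsub2) (hgain y hyc)
  have hsplit : (U ∩ bal c 1).card + (U \ bal c 1).card = U.card :=
    Finset.card_inter_add_card_sdiff U (bal c 1)
  have hbig : τ < (U ∩ bal c 1).card := by omega
  have hsub3 : U ∩ bal c 1 ⊆ R ∩ bal c 1 ∩ bal j 1 ∩ Ps := by
    intro x hx
    rw [Finset.mem_inter] at hx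
    obtain ⟨hxU, hxc⟩ := hx
    simp only [hU, Finset.mem_inter] at hxU
    obtain ⟨⟨hxR, hxj⟩, hxPs⟩ := hxU
    exact Finset.mem_inter.2 ⟨Finset.mem_inter.2 ⟨Finset.mem_inter.2 ⟨hxR, hxc⟩, hxj⟩, hxPs⟩
  rw [hIj, Finset.mem_filter]
  exact ⟨hcPs, lt_of_lt_of_le hbig (Finset.card_le_card hsub3)⟩
end

section
/- Let n, k ∈ ℕ with k ≤ n, let a : Fin n → ℤ with a i ≥ 0 for all i, let A = Σ_i a i, and suppose A is even. Then there exists a subset S ⊆ Fin n with |S| ≤ k, Σ_{i ∈ S} (A + a i) ≥ k·A + A/2 and Σ_{i ∈ S} (A − a i) ≥ k·A − A/2, if and only if there exists a subset S ⊆ Fin n with |S| = k and Σ_{i ∈ S} a i = A/2. (This is the correctness of the reduction embedding subset-sum into colorful k-center: a set of at most k chosen clusters, where cluster i contains A + a_i red points and A − a_i blue points, meets the coverage requirements r = kA + A/2 and b = kA − A/2 exactly when it corresponds to a size-k subset of the numbers summing to A/2.) -/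
/-- correctness of the reduction embedding subset-sum into colorful
`k`-center. -/
theorem stmt10 (n k : ℕ) (hk : k ≤ n) (a : Fin n → ℤ) (ha : ∀ i, 0 ≤ a i)
    (A : ℤ) (hA : A = ∑ i, a i) (heven : Even A) :
    (∃ S : Finset (Fin n), S.card ≤ k ∧
        (k : ℤ) * A + A / 2 ≤ ∑ i ∈ S, (A + a i) ∧
        (k : ℤ) * A - A / 2 ≤ ∑ i ∈ S, (A - a i)) ↔
      (∃ S : Finset (Fin n), S.card = k ∧ ∑ i ∈ S, a i = A / 2) := by
  have hA0 : 0 ≤ A := hA ▸ Finset.sum_nonneg fun i _ => ha i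
  have hhalf : 2 * (A / 2) = A := by
    obtain ⟨c, hc⟩ := heven
    omega
  constructor
  · rintro ⟨S, hcard, h1, h2'⟩
    have e1 : ∑ i ∈ S, (A + a i) = (S.card : ℤ) * A + ∑ i ∈ S, a i := by
      rw [Finset.sum_add_distrib, Finset.sum_const, nsmul_eq_mul]
    have e2 : ∑ i ∈ S, (A - a i) = (S.card : ℤ) * A - ∑ i ∈ S, a i := by
      rw [Finset.sum_sub_distrib, Finset.sum_const, nsmul_eq_mul]
    rw [e1] at h1
    rw [e2] at h2'
    rcases eq_or_lt_of_le hA0 with hz | hpos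
    · -- A = 0, all a i = 0; pick any subset of size k
      obtain ⟨S', hS'sub, hS'card⟩ :=
        (Finset.exists_subset_card_eq (by simpa using hk) : ∃ t ⊆ (Finset.univ : Finset (Fin n)), t.card = k)
      refine ⟨S', hS'card, ?_⟩
      have hall : ∀ i ∈ Finset.univ, a i = 0 :=
        (Finset.sum_eq_zero_iff_of_nonneg fun i _ => ha i).mp (by omega)
      rw [Finset.sum_eq_zero fun i _ => hall i (Finset.mem_univ i)]
      omega
    · -- A > 0 forces S.card = k
      have hck : (S.card : ℤ) = k := by
        have hle : (S.card : ℤ) ≤ k := by exact_mod_cast hcard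
        nlinarith
      refine ⟨S, by exact_mod_cast hck, ?_⟩
      rw [hck] at h1 h2'
      omega
  · rintro ⟨S, hcard, hsum⟩
    refine ⟨S, le_of_eq hcard, ?_, ?_⟩ <;>
      simp only [Finset.sum_add_distrib, Finset.sum_sub_distrib, Finset.sum_const,
        nsmul_eq_mul, hcard, hsum] <;> omega
end

section
/- Let n ∈ ℕ, let A be a symmetric real (n+1) × (n+1) matrix, and let B be its leading principal n × n submatrix (B i j = A (Fin.castSucc i) (Fin.castSucc j)). If B is positive semidefinite and the rank of A equals the rank of B, then A is positive semidefinite. -/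
open Matrix

/-- if a symmetric real `(n+1) × (n+1)` matrix `A` has positive semidefinite
leading principal `n × n` submatrix `B` and `rank A = rank B`, then `A` is positive
semidefinite. -/
theorem stmt11 (n : ℕ) (A : Matrix (Fin (n + 1)) (Fin (n + 1)) ℝ) (hA : A.IsSymm)
    (B : Matrix (Fin n) (Fin n) ℝ)
    (hB : B = A.submatrix Fin.castSucc Fin.castSucc)
    (hBpsd : B.PosSemidef) (hrank : A.rank = B.rank) :
    A.PosSemidef := by
  -- M : the (n+1) × n submatrix consisting of the first n columns of A
  have hM : True := trivial
  set M : Matrix (Fin (n + 1)) (Fin n) ℝ := A.submatrix id Fin.castSucc with hMdef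
  have hMA : ∀ v : Fin n → ℝ, M *ᵥ v = A *ᵥ Fin.snoc v 0 := by
    intro v
    funext j
    simp [hMdef, Matrix.mulVec, dotProduct, Fin.sum_univ_castSucc]
  have hle : LinearMap.range M.mulVecLin ≤ LinearMap.range A.mulVecLin := by
    rintro x ⟨v, rfl⟩
    exact ⟨Fin.snoc v 0, (hMA v).symm⟩
  -- rank B ≤ rank M
  have hBM : ∀ v : Fin n → ℝ, B *ᵥ v = (M *ᵥ v) ∘ Fin.castSucc := by
    intro v
    rw [hB]
    rfl
  have hrankBM : B.rank ≤ M.rank := by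
    have hcomp : B.mulVecLin =
        (LinearMap.funLeft ℝ ℝ Fin.castSucc).comp M.mulVecLin := by
      ext v
      simp [hBM v, hB, hMdef, LinearMap.funLeft]
    rw [Matrix.rank, Matrix.rank, hcomp, LinearMap.range_comp]
    exact Submodule.finrank_map_le _ _
  have hrankMA : M.rank ≤ A.rank := Submodule.finrank_mono hle
  have hfr : LinearMap.range M.mulVecLin = LinearMap.range A.mulVecLin := by
    apply Submodule.eq_of_le_of_finrank_eq hle
    have h2 : M.rank = A.rank := le_antisymm hrankMA (le_of_eq_of_le hrank hrankBM)
    exact h2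
  -- the last column of A is a combination of the first n columns
  obtain ⟨c, hc⟩ : ∃ c : Fin n → ℝ, M *ᵥ c = A *ᵥ Pi.single (Fin.last n) 1 := by
    have : A *ᵥ Pi.single (Fin.last n) 1 ∈ LinearMap.range A.mulVecLin :=
      ⟨Pi.single (Fin.last n) 1, rfl⟩
    rw [← hfr] at this
    exact this
  have hcol : ∀ j, A j (Fin.last n) = ∑ i, A j i.castSucc * c i := by
    intro j
    have h1 := congrFun hc j
    simp [hMdef, Matrix.mulVec, dotProduct, Pi.single_apply, mul_ite, Finset.sum_ite_eq] at h1
    exact h1.symm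
  have hAT : Aᵀ = A := hA
  refine Matrix.posSemidef_iff_dotProduct_mulVec.mpr ⟨?_, ?_⟩
  · exact (Matrix.conjTranspose_eq_transpose_of_trivial A).trans hAT
  intro x
  set t : ℝ := x (Fin.last n) with ht
  set z : Fin n → ℝ := fun i => x i.castSucc + t * c i with hz
  have key : A *ᵥ x = A *ᵥ Fin.snoc z 0 := by
    funext j
    simp only [Matrix.mulVec, dotProduct, Fin.sum_univ_castSucc, Fin.snoc_castSucc,
      Fin.snoc_last, hz]
    rw [hcol j, Finset.sum_mul]
    simp only [mul_add, Finset.sum_add_distrib, mul_zero, add_zero]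
    congr 1
    · apply Finset.sum_congr rfl
      intros i _
      rw [← ht]
      ring
  have quad : x ⬝ᵥ A *ᵥ x =
      (Fin.snoc z 0 : Fin (n+1) → ℝ) ⬝ᵥ A *ᵥ Fin.snoc z 0 := by
    calc x ⬝ᵥ A *ᵥ x = x ⬝ᵥ A *ᵥ Fin.snoc z 0 := by rw [key]
      _ = (x ᵥ* A) ⬝ᵥ Fin.snoc z 0 := Matrix.dotProduct_mulVec _ _ _
      _ = (A *ᵥ x) ⬝ᵥ Fin.snoc z 0 := by
        nth_rewrite 1 [← hAT]
        rw [Matrix.vecMul_transpose]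
      _ = (A *ᵥ Fin.snoc z 0) ⬝ᵥ (Fin.snoc z 0 : Fin (n+1) → ℝ) := by rw [key]
      _ = (Fin.snoc z 0 : Fin (n+1) → ℝ) ⬝ᵥ A *ᵥ Fin.snoc z 0 :=
        dotProduct_comm _ _
  have quad2 : (Fin.snoc z 0 : Fin (n+1) → ℝ) ⬝ᵥ A *ᵥ Fin.snoc z 0 = z ⬝ᵥ B *ᵥ z := by
    simp [dotProduct, Matrix.mulVec, Fin.sum_univ_castSucc, hB]
  have hpos := hBpsd.dotProduct_mulVec_nonneg z
  simp only [star_trivial] at hpos ⊢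
  rw [quad, quad2]
  exact hpos
end
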